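/- arXiv:1508.04315 — 9 statements merged into one kernel-verified Lean document; each statement's English description precedes it below -/
import Mathlib

section
/- The double series ∑_{n₁=1}^∞ ∑_{n₂=1}^∞ (n₁·n₂)/(n₁+n₂)! equals (2/3)·e. -/
open Finset

noncomputable def f : ℕ × ℕ → ℝ := fun p => (p.1 : ℝ) * p.2 / (Nat.factorial (p.1 + p.2))

lemma f_nonneg (p : ℕ × ℕ) : 0 ≤ f p := by
  unfold f; positivity

-- exp 1 as tsum
lemma exp_one_tsum : ∑' n : ℕ, (1 : ℝ) / (Nat.factorial n) = Real.exp 1 := by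
  rw [Real.exp_eq_exp_ℝ, NormedSpace.exp_eq_tsum_div]
  simp

lemma summable_inv_fact : Summable (fun n : ℕ => (1 : ℝ) / (Nat.factorial n)) := by
  simpa using Real.summable_pow_div_factorial 1

-- the two auxiliary series
noncomputable def h2 : ℕ → ℝ := fun s => (s : ℝ) * ((s : ℝ) - 1) / (Nat.factorial s)
noncomputable def h3 : ℕ → ℝ := fun s => (s : ℝ) * ((s : ℝ) - 1) * ((s : ℝ) - 2) / (Nat.factorial s)

lemma h2_shift (n : ℕ) : h2 (n + 2) = 1 / (Nat.factorial n) := by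
  unfold h2
  rw [show n + 2 = n + 1 + 1 by ring, Nat.factorial_succ, Nat.factorial_succ]
  push_cast
  rw [div_eq_div_iff (by positivity) (by positivity)]
  ring

lemma h3_shift (n : ℕ) : h3 (n + 3) = 1 / (Nat.factorial n) := by
  unfold h3
  rw [show n + 3 = n + 1 + 1 + 1 by ring, Nat.factorial_succ, Nat.factorial_succ,
    Nat.factorial_succ]
  push_cast
  rw [div_eq_div_iff (by positivity) (by positivity)]
  ring

lemma summable_h2 : Summable h2 := by
  rw [← summable_nat_add_iff 2]
  simpa [h2_shift] using summable_inv_fact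

lemma summable_h3 : Summable h3 := by
  rw [← summable_nat_add_iff 3]
  simpa [h3_shift] using summable_inv_fact

lemma tsum_h2 : ∑' s, h2 s = Real.exp 1 := by
  rw [← Summable.sum_add_tsum_nat_add 2 summable_h2]
  have : ∑ i ∈ range 2, h2 i = 0 := by simp [Finset.sum_range_succ, h2]
  rw [this]
  simp only [h2_shift, exp_one_tsum, zero_add]

lemma tsum_h3 : ∑' s, h3 s = Real.exp 1 := by
  rw [← Summable.sum_add_tsum_nat_add 3 summable_h3]
  have : ∑ i ∈ range 3, h3 i = 0 := by
    simp [Finset.sum_range_succ, h3]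
  rw [this]
  simp only [h3_shift, exp_one_tsum, zero_add]

noncomputable def F : ℕ → ℝ := fun s => (h3 s + 3 * h2 s) / 6

lemma summable_F : Summable F :=
  ((summable_h3.add (summable_h2.mul_left 3)).div_const 6)

lemma tsum_F : ∑' s, F s = 2 / 3 * Real.exp 1 := by
  unfold F
  rw [tsum_div_const, Summable.tsum_add summable_h3 (summable_h2.mul_left 3),
    tsum_mul_left, tsum_h2, tsum_h3]
  ring

-- Gauss sum in ℝ
lemma gauss (n : ℕ) : ∑ i ∈ range (n + 1), (i : ℝ) = n * (n + 1) / 2 := by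
  induction n with
  | zero => simp
  | succ n ih =>
    rw [Finset.sum_range_succ, ih]
    push_cast
    ring

lemma cubic (s : ℕ) : ∑ i ∈ range (s + 1), (i : ℝ) * ((s : ℝ) - i) =
    ((s : ℝ) ^ 3 - s) / 6 := by
  induction s with
  | zero => simp
  | succ n ih =>
    have : ∀ i ∈ range (n + 1), (i : ℝ) * (((n : ℕ) + 1 : ℝ) - i)
        = (i : ℝ) * ((n : ℝ) - i) + i := by
      intro i _; ring
    rw [Finset.sum_range_succ]
    push_cast
    rw [Finset.sum_congr rfl (fun i hi => by ring :
      ∀ i ∈ range (n + 1), (i : ℝ) * (((n : ℝ) + 1) - i) = (i : ℝ) * ((n : ℝ) - i) + i),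
      Finset.sum_add_distrib, ih, gauss]
    ring

lemma antidiag_sum (s : ℕ) : ∑ p ∈ Finset.HasAntidiagonal.antidiagonal s, f p = F s := by
  rw [Finset.Nat.sum_antidiagonal_eq_sum_range_succ_mk]
  have key : ∀ i ∈ range (s + 1), f (i, s - i)
      = (i : ℝ) * ((s : ℝ) - i) / (Nat.factorial s) := by
    intro i hi
    have hle : i ≤ s := Nat.lt_succ_iff.mp (Finset.mem_range.mp hi)
    unfold f
    rw [Nat.add_sub_cancel' hle]
    congr 1
    rw [Nat.cast_sub hle]
  rw [Finset.sum_congr rfl key, ← Finset.sum_div, cubic]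
  unfold F h2 h3
  have hs : (Nat.factorial s : ℝ) ≠ 0 := by positivity
  field_simp
  ring


lemma summable_f : Summable f := by
  have h := (summable_sigma_of_nonneg (f := f ∘ Finset.HasAntidiagonal.sigmaAntidiagonalEquivProd)
      (fun x => f_nonneg _)).2 ⟨fun n => Summable.of_finite, ?_⟩
  · exact Finset.HasAntidiagonal.sigmaAntidiagonalEquivProd.summable_iff.mp h
  · apply Summable.congr summable_F
    intro n
    rw [tsum_fintype]
    rw [show (∑ p : Finset.HasAntidiagonal.antidiagonal n,
        (f ∘ Finset.HasAntidiagonal.sigmaAntidiagonalEquivProd) ⟨n, p⟩)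
        = ∑ p ∈ Finset.HasAntidiagonal.antidiagonal n, f p from Finset.sum_attach _ _]
    exact (antidiag_sum n).symm

lemma tsum_f : ∑' p : ℕ × ℕ, f p = 2 / 3 * Real.exp 1 := by
  rw [← Finset.HasAntidiagonal.sigmaAntidiagonalEquivProd.tsum_eq f]
  have hs : Summable (f ∘ Finset.HasAntidiagonal.sigmaAntidiagonalEquivProd) :=
    Finset.HasAntidiagonal.sigmaAntidiagonalEquivProd.summable_iff.mpr summable_f
  rw [show (∑' (c : (n : ℕ) × { x // x ∈ Finset.HasAntidiagonal.antidiagonal n }), f (Finset.HasAntidiagonal.sigmaAntidiagonalEquivProd c)) = ∑' (c : (n : ℕ) × { x // x ∈ Finset.HasAntidiagonal.antidiagonal n }), (f ∘ Finset.HasAntidiagonal.sigmaAntidiagonalEquivProd) c from rfl, Summable.tsum_sigma hs, ← tsum_F]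
  apply tsum_congr
  intro n
  rw [tsum_fintype]
  rw [show (∑ p : Finset.HasAntidiagonal.antidiagonal n,
      (f ∘ Finset.HasAntidiagonal.sigmaAntidiagonalEquivProd) ⟨n, p⟩)
      = ∑ p ∈ Finset.HasAntidiagonal.antidiagonal n, f p from Finset.sum_attach _ _]
  exact antidiag_sum n

lemma tsum_pnat_eq (g : ℕ → ℝ) (h0 : g 0 = 0) : ∑' n : ℕ+, g n = ∑' n : ℕ, g n := by
  apply Function.Injective.tsum_eq (g := fun n : ℕ+ => (n : ℕ))
  · intro a b hab; exact PNat.coe_injective hab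
  · intro n hn
    rcases Nat.eq_zero_or_pos n with h | h
    · exact absurd (h ▸ h0) hn
    · exact ⟨⟨n, h⟩, rfl⟩

theorem stmt_1 :
    ∑' n₁ : ℕ+, ∑' n₂ : ℕ+,
      ((n₁ : ℝ) * n₂) / (Nat.factorial (n₁ + n₂ : ℕ)) = (2 / 3) * Real.exp 1 := by
  have inner : ∀ n₁ : ℕ, (∑' n₂ : ℕ+, ((n₁ : ℝ) * (n₂ : ℕ)) / (Nat.factorial (n₁ + (n₂ : ℕ))))
      = ∑' n₂ : ℕ, f (n₁, n₂) := by
    intro n₁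
    exact tsum_pnat_eq (fun n₂ => f (n₁, n₂)) (by simp [f])
  calc ∑' n₁ : ℕ+, ∑' n₂ : ℕ+, ((n₁ : ℝ) * n₂) / (Nat.factorial (n₁ + n₂ : ℕ))
      = ∑' n₁ : ℕ+, ∑' n₂ : ℕ, f ((n₁ : ℕ), n₂) := tsum_congr (fun n₁ => inner n₁)
    _ = ∑' n₁ : ℕ, ∑' n₂ : ℕ, f (n₁, n₂) := by
        apply tsum_pnat_eq (fun n₁ => ∑' n₂ : ℕ, f (n₁, n₂))
        have : ∀ n₂ : ℕ, f (0, n₂) = 0 := fun n₂ => by simp [f]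
        simp [this]
    _ = ∑' p : ℕ × ℕ, f p := (Summable.tsum_prod summable_f).symm
    _ = 2 / 3 * Real.exp 1 := tsum_f
end

section
/- For every positive integer k, the multiple series S_k := ∑_{n₁=1}^∞ ⋯ ∑_{n_k=1}^∞ (n₁⋯n_k)/(n₁+⋯+n_k)! equals e · ∑_{i=0}^{k-1} C(k-1, i) / (2k-i-1)!, where C denotes the binomial coefficient. In particular S_k is a rational multiple of e. -/
open Finset Finset.Nat

open scoped ENNReal

/-- Hockey stick on the antidiagonal. -/
private lemma hockey (j : ℕ) : ∀ M : ℕ,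
    ∑ p ∈ antidiagonal M, Nat.choose (p.2 + j) j = Nat.choose (M + j + 1) (j + 1) := by
  intro M
  induction M with
  | zero => simp
  | succ M ih =>
    rw [Finset.Nat.sum_antidiagonal_succ (f := fun p => Nat.choose (p.2 + j) j), ih]
    rw [show M + 1 + j = M + j + 1 from by omega]
    exact (Nat.choose_succ_succ _ _).symm

private lemma lemA1 (j : ℕ) : ∀ M : ℕ,
    ∑ p ∈ antidiagonal M, (p.1 + 1) * Nat.choose (p.2 + j) j
      = Nat.choose (M + j + 2) (j + 2) := by
  intro M
  induction M with
  | zero => simp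
  | succ M ih =>
    rw [Finset.Nat.sum_antidiagonal_succ (f := fun p => (p.1 + 1) * Nat.choose (p.2 + j) j)]
    have hsplit : ∑ p ∈ antidiagonal M, (p.1 + 1 + 1) * Nat.choose (p.2 + j) j
        = (∑ p ∈ antidiagonal M, (p.1 + 1) * Nat.choose (p.2 + j) j)
          + ∑ p ∈ antidiagonal M, Nat.choose (p.2 + j) j := by
      rw [← Finset.sum_add_distrib]
      exact Finset.sum_congr rfl fun p _ => by ring
    rw [hsplit, ih, hockey]
    rw [show ((0, M + 1) : ℕ × ℕ).1 + 1 = 1 from rfl, one_mul]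
    rw [show M + 1 + j = M + j + 1 from by omega]
    rw [show M + j + 1 + 2 = M + j + 3 from by omega]
    have p1 : (M + j + 3).choose (j + 2)
        = (M + j + 2).choose (j + 1) + (M + j + 2).choose (j + 2) :=
      Nat.choose_succ_succ (M + j + 2) (j + 1)
    have p2 : (M + j + 2).choose (j + 1)
        = (M + j + 1).choose j + (M + j + 1).choose (j + 1) :=
      Nat.choose_succ_succ (M + j + 1) j
    rw [p1, p2]
    ring

/-- Decompose a sum over `antidiagonalTuple (k+1) n`. -/
private lemma sum_adT_succ {M : Type*} [AddCommMonoid M] (k n : ℕ)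
    (f : (Fin (k + 1) → ℕ) → M) :
    ∑ x ∈ antidiagonalTuple (k + 1) n, f x
      = ∑ p ∈ antidiagonal n, ∑ x ∈ antidiagonalTuple k p.2, f (Fin.cons p.1 x) := by
  rw [Finset.sum_sigma']
  refine Finset.sum_nbij' (fun y => ⟨(y 0, ∑ i, Fin.tail y i), Fin.tail y⟩)
    (fun q => Fin.cons q.1.1 q.2) ?_ ?_ ?_ ?_ ?_
  · intro y hy
    rw [mem_antidiagonalTuple] at hy
    refine Finset.mem_sigma.mpr ⟨?_, mem_antidiagonalTuple.mpr rfl⟩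
    rw [Finset.HasAntidiagonal.mem_antidiagonal, ← hy, Fin.sum_univ_succ]
    rfl
  · rintro ⟨⟨a, b⟩, x⟩ hq
    simp only [Finset.mem_sigma, Finset.HasAntidiagonal.mem_antidiagonal,
      mem_antidiagonalTuple] at hq
    rw [mem_antidiagonalTuple, Fin.sum_cons, hq.2, hq.1]
  · intro y _
    exact Fin.cons_self_tail y
  · rintro ⟨⟨a, b⟩, x⟩ hq
    simp only [Finset.mem_sigma, Finset.HasAntidiagonal.mem_antidiagonal,
      mem_antidiagonalTuple] at hq
    simp [Fin.cons_zero, Fin.tail_cons, hq.2]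
  · intro y _
    exact congrArg f (Fin.cons_self_tail y).symm

/-- Sum of products of (parts+1) over antidiagonal tuples. -/
private lemma lemA : ∀ (k : ℕ) (M : ℕ),
    ∑ x ∈ antidiagonalTuple (k + 1) M, ∏ i, (x i + 1)
      = Nat.choose (M + (2 * k + 1)) (2 * k + 1) := by
  intro k
  induction k with
  | zero =>
    intro M
    rw [antidiagonalTuple_one]
    simp [Nat.choose_one_right]
  | succ k ih =>
    intro M
    rw [sum_adT_succ]
    have hinner : ∀ p ∈ antidiagonal M,
        (∑ x ∈ antidiagonalTuple (k + 1) p.2, ∏ i, (Fin.cons p.1 x i + 1))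
          = (p.1 + 1) * Nat.choose (p.2 + (2 * k + 1)) (2 * k + 1) := by
      intro p _
      rw [← ih p.2, Finset.mul_sum]
      refine Finset.sum_congr rfl fun x _ => ?_
      rw [Fin.prod_univ_succ]
      simp [Fin.cons_zero, Fin.cons_succ]
    rw [Finset.sum_congr rfl hinner, lemA1]
    congr 1

/-- Vandermonde specialization. -/
private lemma vand (k N : ℕ) :
    Nat.choose (N + k) (2 * k + 1)
      = ∑ i ∈ Finset.range (k + 1), Nat.choose k i * Nat.choose N (2 * k + 1 - i) := by
  rw [add_comm N k, Nat.add_choose_eq,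
    Finset.Nat.sum_antidiagonal_eq_sum_range_succ_mk]
  symm
  apply Finset.sum_subset
  · intro i hi
    simp only [Finset.mem_range] at hi ⊢
    omega
  · intro i _ hni
    simp only [Finset.mem_range] at hni
    rw [Nat.choose_eq_zero_of_lt (by omega), zero_mul]

private lemma tsum_choose_fact (r : ℕ) :
    ∑' N : ℕ, (Nat.choose N r : ℝ≥0∞) / (Nat.factorial N : ℝ≥0∞)
      = (Nat.factorial r : ℝ≥0∞)⁻¹ * ∑' j : ℕ, (Nat.factorial j : ℝ≥0∞)⁻¹ := by
  rw [← ENNReal.tsum_mul_left]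
  rw [← Function.Injective.tsum_eq (g := fun j : ℕ => j + r)
    (add_left_injective r)
    (f := fun N : ℕ => (Nat.choose N r : ℝ≥0∞) / (Nat.factorial N : ℝ≥0∞)) ?_]
  · refine tsum_congr fun j => ?_
    have hC0 : ((Nat.choose (j + r) r : ℕ) : ℝ≥0∞) ≠ 0 := by
      exact_mod_cast (Nat.choose_pos (Nat.le_add_left r j)).ne'
    have hCt : ((Nat.choose (j + r) r : ℕ) : ℝ≥0∞) ≠ ⊤ := ENNReal.natCast_ne_top _
    have hfac : ((Nat.factorial (j + r) : ℕ) : ℝ≥0∞)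
        = ((Nat.choose (j + r) r : ℕ) : ℝ≥0∞)
          * ((Nat.factorial r : ℝ≥0∞) * (Nat.factorial j : ℝ≥0∞)) := by
      have h := Nat.choose_mul_factorial_mul_factorial (Nat.le_add_left r j)
      rw [Nat.add_sub_cancel, mul_assoc] at h
      exact_mod_cast h.symm
    calc ((Nat.choose (j + r) r : ℕ) : ℝ≥0∞) / ((Nat.factorial (j + r) : ℕ) : ℝ≥0∞)
        = (((Nat.choose (j + r) r : ℕ) : ℝ≥0∞) * 1)
            / (((Nat.choose (j + r) r : ℕ) : ℝ≥0∞)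
              * ((Nat.factorial r : ℝ≥0∞) * (Nat.factorial j : ℝ≥0∞))) := by
          rw [mul_one, ← hfac]
      _ = 1 / ((Nat.factorial r : ℝ≥0∞) * (Nat.factorial j : ℝ≥0∞)) :=
          ENNReal.mul_div_mul_left _ _ hC0 hCt
      _ = (Nat.factorial r : ℝ≥0∞)⁻¹ * (Nat.factorial j : ℝ≥0∞)⁻¹ := by
          rw [one_div, ENNReal.mul_inv (Or.inl (by exact_mod_cast (Nat.factorial_pos r).ne'))
            (Or.inl (ENNReal.natCast_ne_top _))]
  · intro N hN
    rcases le_or_gt r N with h | h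
    · exact ⟨N - r, Nat.sub_add_cancel h⟩
    · exfalso
      apply hN
      simp [Nat.choose_eq_zero_of_lt h]

private lemma ennreal_exp :
    (∑' j : ℕ, (Nat.factorial j : ℝ≥0∞)⁻¹) = ENNReal.ofReal (Real.exp 1) := by
  have h1 : Real.exp 1 = ∑' n : ℕ, ((Nat.factorial n : ℝ))⁻¹ := by
    rw [Real.exp_eq_exp_ℝ, NormedSpace.exp_eq_tsum_div]
    simp [one_div]
  have hsumm : Summable fun n : ℕ => ((Nat.factorial n : ℝ))⁻¹ := by
    simpa [one_div] using Real.summable_pow_div_factorial 1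
  rw [h1, ENNReal.ofReal_tsum_of_nonneg (fun n => by positivity) hsumm]
  refine tsum_congr fun n => ?_
  rw [ENNReal.ofReal_inv_of_pos (by exact_mod_cast Nat.factorial_pos n),
    ENNReal.ofReal_natCast]

theorem stmt_3 (k : ℕ) (hk : 1 ≤ k) :
    ∑' n : Fin k → ℕ+,
        (∏ i, (n i : ℝ)) / (Nat.factorial (∑ i, (n i : ℕ)))
      = Real.exp 1 *
          ∑ i ∈ Finset.range k, (Nat.choose (k - 1) i : ℝ) / (Nat.factorial (2 * k - i - 1)) := by
  obtain ⟨k', rfl⟩ : ∃ k', k = k' + 1 := ⟨k - 1, by omega⟩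
  clear hk
  set F : (Fin (k' + 1) → ℕ+) → ℝ≥0∞ :=
    fun n => ((∏ i, (n i : ℕ) : ℕ) : ℝ≥0∞) / ((Nat.factorial (∑ i, (n i : ℕ)) : ℕ) : ℝ≥0∞)
    with hF
  have hFt : ∀ n, F n ≠ ∞ := by
    intro n
    refine (ENNReal.div_lt_top (ENNReal.natCast_ne_top _) ?_).ne
    exact_mod_cast (Nat.factorial_pos _).ne'
  have h1 : ∑' n : Fin (k' + 1) → ℕ+,
      (∏ i, (n i : ℝ)) / (Nat.factorial (∑ i, (n i : ℕ)) : ℝ)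
      = (∑' n, F n).toReal := by
    rw [ENNReal.tsum_toReal_eq hFt]
    refine tsum_congr fun n => ?_
    rw [hF]
    rw [ENNReal.toReal_div, ENNReal.toReal_natCast, ENNReal.toReal_natCast]
    push_cast
    rfl
  have h2 : (∑' n, F n) = ∑' m : Fin (k' + 1) → ℕ,
      ((∏ i, (m i + 1) : ℕ) : ℝ≥0∞)
        / ((Nat.factorial ((∑ i, m i) + (k' + 1)) : ℕ) : ℝ≥0∞) := by
    rw [← Equiv.tsum_eq (Equiv.piCongrRight fun _ : Fin (k' + 1) => Equiv.pnatEquivNat.symm) F]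
    refine tsum_congr fun m => ?_
    have hc : ∀ i, (((Equiv.piCongrRight fun _ : Fin (k' + 1) => Equiv.pnatEquivNat.symm) m i
        : ℕ+) : ℕ) = m i + 1 := fun i => rfl
    have hsum : (∑ i, (((Equiv.piCongrRight fun _ : Fin (k' + 1) => Equiv.pnatEquivNat.symm) m i
        : ℕ+) : ℕ)) = (∑ i, m i) + (k' + 1) := by
      simp only [hc]
      rw [Finset.sum_add_distrib]
      simp
    rw [hF]
    simp only
    rw [hsum, Finset.prod_congr rfl fun i _ => hc i]
  have h3 : (∑' m : Fin (k' + 1) → ℕ,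
      ((∏ i, (m i + 1) : ℕ) : ℝ≥0∞)
        / ((Nat.factorial ((∑ i, m i) + (k' + 1)) : ℕ) : ℝ≥0∞))
      = ∑' N : ℕ, ((Nat.choose (N + (2 * k' + 1)) (2 * k' + 1) : ℕ) : ℝ≥0∞)
          / ((Nat.factorial (N + (k' + 1)) : ℕ) : ℝ≥0∞) := by
    rw [← Equiv.tsum_eq (Finset.Nat.sigmaAntidiagonalTupleEquivTuple (k' + 1))]
    rw [ENNReal.tsum_sigma']
    refine tsum_congr fun N => ?_
    rw [show (fun b : (antidiagonalTuple (k' + 1) N : Finset (Fin (k' + 1) → ℕ)) =>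
      (fun m : Fin (k' + 1) → ℕ => ((∏ i, (m i + 1) : ℕ) : ℝ≥0∞)
        / ((Nat.factorial ((∑ i, m i) + (k' + 1)) : ℕ) : ℝ≥0∞))
        ((Finset.Nat.sigmaAntidiagonalTupleEquivTuple (k' + 1)) ⟨N, b⟩))
      = fun b : (antidiagonalTuple (k' + 1) N : Finset (Fin (k' + 1) → ℕ)) =>
        ((∏ i, ((b : Fin (k' + 1) → ℕ) i + 1) : ℕ) : ℝ≥0∞)
          / ((Nat.factorial ((∑ i, (b : Fin (k' + 1) → ℕ) i) + (k' + 1)) : ℕ) : ℝ≥0∞)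
      from rfl]
    rw [Finset.tsum_subtype (antidiagonalTuple (k' + 1) N)
      (fun m => ((∏ i, (m i + 1) : ℕ) : ℝ≥0∞)
        / ((Nat.factorial ((∑ i, m i) + (k' + 1)) : ℕ) : ℝ≥0∞))]
    have key : ∀ x ∈ antidiagonalTuple (k' + 1) N,
        ((∏ i, (x i + 1) : ℕ) : ℝ≥0∞)
          / ((Nat.factorial ((∑ i, x i) + (k' + 1)) : ℕ) : ℝ≥0∞)
        = ((∏ i, (x i + 1) : ℕ) : ℝ≥0∞)
          * (((Nat.factorial (N + (k' + 1)) : ℕ) : ℝ≥0∞))⁻¹ := by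
      intro x hx
      rw [mem_antidiagonalTuple] at hx
      rw [hx, div_eq_mul_inv]
    rw [Finset.sum_congr rfl key, ← Finset.sum_mul, ← Nat.cast_sum, lemA k' N,
      ← div_eq_mul_inv]
  have h4 : (∑' N : ℕ, ((Nat.choose (N + (2 * k' + 1)) (2 * k' + 1) : ℕ) : ℝ≥0∞)
        / ((Nat.factorial (N + (k' + 1)) : ℕ) : ℝ≥0∞))
      = ∑' M : ℕ, ((Nat.choose (M + k') (2 * k' + 1) : ℕ) : ℝ≥0∞)
          / ((Nat.factorial M : ℕ) : ℝ≥0∞) := by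
    rw [← Function.Injective.tsum_eq (g := fun N : ℕ => N + (k' + 1))
      (add_left_injective _)
      (f := fun M : ℕ => ((Nat.choose (M + k') (2 * k' + 1) : ℕ) : ℝ≥0∞)
        / ((Nat.factorial M : ℕ) : ℝ≥0∞)) ?_]
    · refine tsum_congr fun N => ?_
      rw [show N + (k' + 1) + k' = N + (2 * k' + 1) from by omega]
    · intro M hM
      rcases le_or_gt (k' + 1) M with h | h
      · exact ⟨M - (k' + 1), Nat.sub_add_cancel h⟩
      · exfalso
        apply hM
        have hlt : M + k' < 2 * k' + 1 := by omega
        simp [Nat.choose_eq_zero_of_lt hlt]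
  have h5 : (∑' M : ℕ, ((Nat.choose (M + k') (2 * k' + 1) : ℕ) : ℝ≥0∞)
        / ((Nat.factorial M : ℕ) : ℝ≥0∞))
      = ∑ i ∈ Finset.range (k' + 1), ((Nat.choose k' i : ℕ) : ℝ≥0∞) *
          ((((Nat.factorial (2 * k' + 1 - i) : ℕ) : ℝ≥0∞))⁻¹
            * ∑' j : ℕ, ((Nat.factorial j : ℕ) : ℝ≥0∞)⁻¹) := by
    have hpt : ∀ M : ℕ, ((Nat.choose (M + k') (2 * k' + 1) : ℕ) : ℝ≥0∞)
          / ((Nat.factorial M : ℕ) : ℝ≥0∞)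
        = ∑ i ∈ Finset.range (k' + 1), ((Nat.choose k' i : ℕ) : ℝ≥0∞)
            * (((Nat.choose M (2 * k' + 1 - i) : ℕ) : ℝ≥0∞)
              / ((Nat.factorial M : ℕ) : ℝ≥0∞)) := by
      intro M
      rw [vand k' M, Nat.cast_sum, div_eq_mul_inv, Finset.sum_mul]
      refine Finset.sum_congr rfl fun i _ => ?_
      rw [Nat.cast_mul, div_eq_mul_inv, mul_assoc]
    calc (∑' M : ℕ, ((Nat.choose (M + k') (2 * k' + 1) : ℕ) : ℝ≥0∞)
          / ((Nat.factorial M : ℕ) : ℝ≥0∞))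
        = ∑' M : ℕ, ∑ i ∈ Finset.range (k' + 1), ((Nat.choose k' i : ℕ) : ℝ≥0∞)
            * (((Nat.choose M (2 * k' + 1 - i) : ℕ) : ℝ≥0∞)
              / ((Nat.factorial M : ℕ) : ℝ≥0∞)) := tsum_congr hpt
      _ = ∑ i ∈ Finset.range (k' + 1), ∑' M : ℕ, ((Nat.choose k' i : ℕ) : ℝ≥0∞)
            * (((Nat.choose M (2 * k' + 1 - i) : ℕ) : ℝ≥0∞)
              / ((Nat.factorial M : ℕ) : ℝ≥0∞)) :=
          Summable.tsum_finsetSum fun i _ => ENNReal.summable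
      _ = ∑ i ∈ Finset.range (k' + 1), ((Nat.choose k' i : ℕ) : ℝ≥0∞) *
          ((((Nat.factorial (2 * k' + 1 - i) : ℕ) : ℝ≥0∞))⁻¹
            * ∑' j : ℕ, ((Nat.factorial j : ℕ) : ℝ≥0∞)⁻¹) := by
          refine Finset.sum_congr rfl fun i _ => ?_
          rw [ENNReal.tsum_mul_left, tsum_choose_fact]
  rw [h1, h2, h3, h4, h5, ennreal_exp]
  rw [ENNReal.toReal_sum (fun i _ => by
    refine ENNReal.mul_ne_top (ENNReal.natCast_ne_top _) (ENNReal.mul_ne_top ?_ ?_)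
    · exact ENNReal.inv_ne_top.mpr (by exact_mod_cast (Nat.factorial_pos _).ne')
    · exact ENNReal.ofReal_ne_top)]
  rw [Finset.mul_sum]
  refine Finset.sum_congr rfl fun i hi => ?_
  rw [Finset.mem_range] at hi
  rw [ENNReal.toReal_mul, ENNReal.toReal_mul, ENNReal.toReal_natCast,
    ENNReal.toReal_inv, ENNReal.toReal_natCast,
    ENNReal.toReal_ofReal (Real.exp_pos 1).le]
  rw [show k' + 1 - 1 = k' from rfl, show 2 * (k' + 1) - i - 1 = 2 * k' + 1 - i from by omega]
  rw [div_eq_mul_inv]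
  ring
end

section
/- For integers 1 ≤ j ≤ k, the series S_{k,j} := ∑_{n₁=1}^∞ ⋯ ∑_{n_k=1}^∞ (n₁⋯n_j)/(n₁+⋯+n_k)! equals e · ∑_{i=0}^{j-1} C(j-1, i) / (k+j-i-1)!. -/
open Finset
open scoped ENNReal

section PLACEHOLDER_NAT

lemma sum_range_choose_shift (a b : ℕ) (hab : a ≤ b) :
    ∀ s, ∑ t ∈ range s, ((t + a).choose b) = (s + a).choose (b + 1)
  | 0 => by simp [Nat.choose_eq_zero_of_lt (by omega : a < b + 1)]
  | (s+1) => by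
      rw [Finset.sum_range_succ, sum_range_choose_shift a b hab s]
      have : s + 1 + a = (s + a) + 1 := by omega
      rw [this, Nat.choose_succ_succ (s + a) b]
      simp only [Nat.succ_eq_add_one]
      omega

lemma sum_range_wchoose_shift (a b : ℕ) (hab : a ≤ b) :
    ∀ s, ∑ t ∈ range s, (s - t) * ((t + a).choose b) = (s + a + 1).choose (b + 2)
  | 0 => by simp [Nat.choose_eq_zero_of_lt (by omega : a + 1 < b + 2)]
  | (s+1) => by
      have h1 : ∀ t ∈ range (s+1), (s + 1 - t) * ((t + a).choose b)
          = (s - t) * ((t + a).choose b) + (t + a).choose b := by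
        intro t ht
        simp only [mem_range] at ht
        have : s + 1 - t = (s - t) + 1 := by omega
        rw [this]; ring
      rw [Finset.sum_congr rfl h1, Finset.sum_add_distrib, sum_range_choose_shift a b hab (s+1),
        Finset.sum_range_succ, Nat.sub_self, zero_mul, add_zero,
        sum_range_wchoose_shift a b hab s]
      have : s + 1 + a = (s + a + 1) := by omega
      rw [this, Nat.choose_succ_succ (s + a + 1) (b + 1)]
      simp only [Nat.succ_eq_add_one]
      have hb : b + 1 + 1 = b + 2 := rfl
      rw [hb]
      omega

lemma icc_reindex (s : ℕ) (f : ℕ → ℕ) :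
    ∑ m ∈ Icc 1 s, f (s - m) = ∑ t ∈ range s, f t := by
  apply Finset.sum_nbij' (fun m => s - m) (fun t => s - t) <;> intros <;>
    simp_all [Finset.mem_Icc, Finset.mem_range] <;> omega

lemma icc_reindex_w (s : ℕ) (f : ℕ → ℕ) :
    ∑ m ∈ Icc 1 s, m * f (s - m) = ∑ t ∈ range s, (s - t) * f t := by
  rw [← icc_reindex s (fun t => (s - t) * f t)]
  apply Finset.sum_congr rfl
  intro m hm
  simp only [Finset.mem_Icc] at hm
  have : s - (s - m) = m := by omega
  rw [this]

/-- weighted composition count: sum over `n : Fin k → ℕ+` with `∑ n = s` of the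
product of the coordinates with index `< j`. -/
def ccount (j : ℕ) : ℕ → ℕ → ℕ
  | 0, s => if s = 0 then 1 else 0
  | (k+1), s => ∑ m ∈ Icc 1 s, (if k < j then m else 1) * ccount j k (s - m)

lemma ccount_A (j : ℕ) : ∀ t, t + 1 ≤ j → ∀ s, ccount j (t+1) s = (s + t).choose (2*t + 1)
  | 0, ht, s => by
      have h0 : ∀ u, ccount j 0 u = if u = 0 then 1 else 0 := fun u => rfl
      rw [ccount]
      have h2 : ∑ m ∈ Icc 1 s, (if 0 < j then m else 1) * ccount j 0 (s - m) = s := by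
        have e1 : ∀ m ∈ Icc 1 s, (if 0 < j then m else 1) * ccount j 0 (s - m)
            = if m = s then s else 0 := by
          intro m hm
          simp only [Finset.mem_Icc] at hm
          rw [if_pos (by omega : 0 < j), h0]
          rcases eq_or_ne m s with h | h
          · subst h; simp
          · rw [if_neg h, if_neg (by omega), mul_zero]
        rw [Finset.sum_congr rfl e1,
          Finset.sum_eq_single s (fun m _ hms => if_neg hms)
            (fun hs => by simp only [Finset.mem_Icc] at hs; rw [if_pos rfl]; omega)]
        simp
      rw [h2]
      simp [Nat.choose_one_right]
  | (t+1), ht, s => by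
      rw [ccount]
      have h1 : ∀ m ∈ Icc 1 s, (if t + 1 < j then m else 1) * ccount j (t+1) (s - m)
          = m * ((s - m + t).choose (2*t+1)) := by
        intro m hm
        rw [if_pos (by omega), ccount_A j t (by omega) (s - m)]
      rw [Finset.sum_congr rfl h1, icc_reindex_w s (fun u => (u+t).choose (2*t+1)),
        sum_range_wchoose_shift t (2*t+1) (by omega) s]
      congr 1 <;> omega

lemma ccount_B (u : ℕ) : ∀ d s, ccount (u+1) (u+1+d) s = (s + u).choose (u + 1 + d + u)
  | 0, s => by
      rw [show u + 1 + 0 = u + 1 from rfl, ccount_A (u+1) u le_rfl s]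
      congr 1 <;> omega
  | (d+1), s => by
      rw [show u + 1 + (d+1) = (u + d + 1) + 1 by omega, ccount]
      have h1 : ∀ m ∈ Icc 1 s, (if u + d + 1 < u + 1 then m else 1) * ccount (u+1) (u+d+1) (s - m)
          = (s - m + u).choose (u + 1 + d + u) := by
        intro m hm
        rw [if_neg (by omega), one_mul, show u + d + 1 = u + 1 + d by omega,
          ccount_B u d (s - m)]
      rw [Finset.sum_congr rfl h1, icc_reindex s (fun t => (t+u).choose (u+1+d+u)),
        sum_range_choose_shift u (u+1+d+u) (by omega) s]
      congr 1 <;> omega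
end PLACEHOLDER_NAT

noncomputable section

/-- reindexing equivalence for the convolution step -/
def convEquiv : (ℕ+ × ℕ) ≃ Σ s : ℕ, {m : ℕ // m ∈ Finset.Icc 1 s} where
  toFun p := ⟨p.2 + (p.1 : ℕ), ⟨(p.1 : ℕ),
    Finset.mem_Icc.mpr ⟨p.1.one_le, Nat.le_add_left _ _⟩⟩⟩
  invFun x := (⟨(x.2 : ℕ), (Finset.mem_Icc.mp x.2.2).1⟩, x.1 - (x.2 : ℕ))
  left_inv p := Prod.ext (Subtype.ext rfl) (Nat.add_sub_cancel _ _)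
  right_inv x := by
    obtain ⟨s, m, hm⟩ := x
    have h := Finset.mem_Icc.mp hm
    exact Sigma.subtype_ext (by simp; omega) rfl

lemma tsum_pnat_conv (g : ℕ → ℕ → ℝ≥0∞) :
    ∑' p : ℕ+ × ℕ, g (p.1 : ℕ) p.2 = ∑' s : ℕ, ∑ m ∈ Finset.Icc 1 s, g m (s - m) := by
  have h1 : ∑' p : ℕ+ × ℕ, g (p.1 : ℕ) p.2
      = ∑' x : Σ s : ℕ, {m : ℕ // m ∈ Finset.Icc 1 s}, g (x.2 : ℕ) (x.1 - (x.2 : ℕ)) := by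
    rw [← convEquiv.tsum_eq
      (fun x : (Σ s : ℕ, {m : ℕ // m ∈ Finset.Icc 1 s}) => g (x.2 : ℕ) (x.1 - (x.2 : ℕ)))]
    exact tsum_congr fun p => by simp [convEquiv]
  rw [h1, ENNReal.tsum_sigma']
  exact tsum_congr fun s => Finset.tsum_subtype (Finset.Icc 1 s) (fun m => g m (s - m))

lemma key (j : ℕ) : ∀ (k : ℕ) (φ : ℕ → ℝ≥0∞),
    ∑' n : Fin k → ℕ+,
      (∏ i ∈ Finset.univ.filter (fun i : Fin k => (i : ℕ) < j), ((n i : ℕ) : ℝ≥0∞))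
        * φ (∑ i, (n i : ℕ))
    = ∑' s : ℕ, (ccount j k s : ℝ≥0∞) * φ s
  | 0, φ => by
    rw [tsum_eq_single (fun _ => 1) (fun b hb => absurd (Subsingleton.elim b _) hb),
      tsum_eq_single 0 (fun s hs => by simp [ccount, hs])]
    simp [ccount]
  | (k+1), φ => by
    have hsum : ∀ (m : ℕ+) (n' : Fin k → ℕ+),
        (∑ i, ((Fin.snoc n' m : Fin (k+1) → ℕ+) i : ℕ)) = (∑ i, (n' i : ℕ)) + (m : ℕ) := by
      intro m n'
      rw [Fin.sum_univ_castSucc]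
      simp
    have hprod : ∀ (m : ℕ+) (n' : Fin k → ℕ+),
        (∏ i ∈ Finset.univ.filter (fun i : Fin (k+1) => (i : ℕ) < j),
            (((Fin.snoc n' m : Fin (k+1) → ℕ+) i : ℕ) : ℝ≥0∞))
        = (∏ i ∈ Finset.univ.filter (fun i : Fin k => (i : ℕ) < j), ((n' i : ℕ) : ℝ≥0∞))
          * (if k < j then ((m : ℕ) : ℝ≥0∞) else 1) := by
      intro m n'
      rw [Finset.prod_filter, Finset.prod_filter, Fin.prod_univ_castSucc]
      simp
    calc ∑' n : Fin (k+1) → ℕ+,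
          (∏ i ∈ Finset.univ.filter (fun i : Fin (k+1) => (i : ℕ) < j), ((n i : ℕ) : ℝ≥0∞))
            * φ (∑ i, (n i : ℕ))
        = ∑' p : ℕ+ × (Fin k → ℕ+),
            (∏ i ∈ Finset.univ.filter (fun i : Fin (k+1) => (i : ℕ) < j),
              (((Fin.snoc p.2 p.1 : Fin (k+1) → ℕ+) i : ℕ) : ℝ≥0∞))
            * φ (∑ i, ((Fin.snoc p.2 p.1 : Fin (k+1) → ℕ+) i : ℕ)) := (Equiv.tsum_eq (Fin.snocEquiv (fun _ : Fin (k+1) => ℕ+)) _).symm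
      _ = ∑' (m : ℕ+) (n' : Fin k → ℕ+),
            (∏ i ∈ Finset.univ.filter (fun i : Fin (k+1) => (i : ℕ) < j),
              (((Fin.snoc n' m : Fin (k+1) → ℕ+) i : ℕ) : ℝ≥0∞))
            * φ (∑ i, ((Fin.snoc n' m : Fin (k+1) → ℕ+) i : ℕ)) := ENNReal.tsum_prod'
      _ = ∑' (m : ℕ+), (if k < j then ((m : ℕ) : ℝ≥0∞) else 1) *
            ∑' (n' : Fin k → ℕ+),
              (∏ i ∈ Finset.univ.filter (fun i : Fin k => (i : ℕ) < j), ((n' i : ℕ) : ℝ≥0∞))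
              * φ ((∑ i, (n' i : ℕ)) + (m : ℕ)) := by
          refine tsum_congr fun m => ?_
          rw [← ENNReal.tsum_mul_left]
          refine tsum_congr fun n' => ?_
          rw [hprod m n', hsum m n']
          ring
      _ = ∑' (m : ℕ+), (if k < j then ((m : ℕ) : ℝ≥0∞) else 1) *
            ∑' t : ℕ, (ccount j k t : ℝ≥0∞) * φ (t + (m : ℕ)) := by
          refine tsum_congr fun m => ?_
          exact congrArg (fun z => (if k < j then ((m : ℕ) : ℝ≥0∞) else 1) * z)
            (key j k (fun t => φ (t + (m : ℕ))))
      _ = ∑' (m : ℕ+) (t : ℕ),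
            (if k < j then ((m : ℕ) : ℝ≥0∞) else 1) * ((ccount j k t : ℝ≥0∞) * φ (t + (m : ℕ))) := by
          refine tsum_congr fun m => ?_
          rw [ENNReal.tsum_mul_left]
      _ = ∑' p : ℕ+ × ℕ,
            (if k < j then ((p.1 : ℕ) : ℝ≥0∞) else 1)
              * ((ccount j k p.2 : ℝ≥0∞) * φ (p.2 + (p.1 : ℕ))) := ENNReal.tsum_prod.symm
      _ = ∑' s : ℕ, ∑ m ∈ Finset.Icc 1 s,
            (if k < j then ((m : ℕ) : ℝ≥0∞) else 1)
              * ((ccount j k (s - m) : ℝ≥0∞) * φ ((s - m) + m)) :=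
          tsum_pnat_conv (fun m t =>
            (if k < j then ((m : ℕ) : ℝ≥0∞) else 1) * ((ccount j k t : ℝ≥0∞) * φ (t + m)))
      _ = ∑' s : ℕ, (ccount j (k+1) s : ℝ≥0∞) * φ s := by
          refine tsum_congr fun s => ?_
          have hc : ∀ m ∈ Finset.Icc 1 s,
              (if k < j then ((m : ℕ) : ℝ≥0∞) else 1)
                * ((ccount j k (s - m) : ℝ≥0∞) * φ ((s - m) + m))
              = (((if k < j then m else 1) * ccount j k (s - m) : ℕ) : ℝ≥0∞) * φ s := by
            intro m hm
            have hmm := Finset.mem_Icc.mp hm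
            have hs : s - m + m = s := by omega
            rw [hs, Nat.cast_mul, Nat.cast_ite, Nat.cast_one]
            ring
          rw [Finset.sum_congr rfl hc, ← Finset.sum_mul, ← Nat.cast_sum, ccount]

lemma fact_inv_tsum (m : ℕ) :
    ∑' s : ℕ, (s.choose m : ℝ≥0∞) * ((s.factorial : ℝ≥0∞))⁻¹
      = ((m.factorial : ℝ≥0∞))⁻¹ * ∑' t : ℕ, ((t.factorial : ℝ≥0∞))⁻¹ := by
  have hinj : Function.Injective (fun t : ℕ => t + m) := fun a b h => by
    simp only [] at h; omega
  have hsupp : Function.support (fun s : ℕ => (s.choose m : ℝ≥0∞) * ((s.factorial : ℝ≥0∞))⁻¹)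
      ⊆ Set.range (fun t : ℕ => t + m) := by
    intro s hs
    rcases le_or_gt m s with h | h
    · exact ⟨s - m, by show s - m + m = s; omega⟩
    · exact absurd (by simp [Nat.choose_eq_zero_of_lt h]) hs
  rw [← hinj.tsum_eq hsupp, ← ENNReal.tsum_mul_left]
  refine tsum_congr fun t => ?_
  have hfact : ((t + m).factorial : ℝ≥0∞)
      = ((t + m).choose m : ℝ≥0∞) * ((m.factorial : ℝ≥0∞) * (t.factorial : ℝ≥0∞)) := by
    have h := Nat.add_choose_mul_factorial_mul_factorial t m
    push_cast [← h]
    ring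
  have hC : ((t + m).choose m : ℝ≥0∞) ≠ 0 :=
    Nat.cast_ne_zero.mpr (Nat.choose_pos (Nat.le_add_left m t)).ne'
  have hCt : ((t + m).choose m : ℝ≥0∞) ≠ ∞ := ENNReal.natCast_ne_top _
  have hM0 : ((m.factorial : ℕ) : ℝ≥0∞) ≠ 0 := Nat.cast_ne_zero.mpr m.factorial_pos.ne'
  have hMt : ((m.factorial : ℕ) : ℝ≥0∞) ≠ ∞ := ENNReal.natCast_ne_top _
  rw [hfact, ENNReal.mul_inv (Or.inl hC) (Or.inl hCt), ← mul_assoc,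
    ENNReal.mul_inv_cancel hC hCt, one_mul, ENNReal.mul_inv (Or.inl hM0) (Or.inl hMt)]

lemma grand (u d : ℕ) :
    ∑' n : Fin (u+1+d) → ℕ+,
      (∏ i ∈ Finset.univ.filter (fun i : Fin (u+1+d) => (i : ℕ) < u+1), ((n i : ℕ) : ℝ≥0∞))
        * (((∑ i, (n i : ℕ)).factorial : ℝ≥0∞))⁻¹
    = (∑' t : ℕ, ((t.factorial : ℝ≥0∞))⁻¹) *
        ∑ i ∈ Finset.range (u+1),
          (u.choose i : ℝ≥0∞) * (((u+1+d+u - i).factorial : ℝ≥0∞))⁻¹ := by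
  refine (key (u+1) (u+1+d) (fun s => ((s.factorial : ℝ≥0∞))⁻¹)).trans ?_
  have h3 : ∀ s : ℕ, (s + u).choose (u+1+d+u)
      = ∑ i ∈ Finset.range (u+1), u.choose i * s.choose (u+1+d+u - i) := by
    intro s
    rw [add_comm s u, Nat.add_choose_eq, Finset.Nat.sum_antidiagonal_eq_sum_range_succ_mk]
    symm
    apply Finset.sum_subset (Finset.range_subset_range.mpr (by omega))
    intro i hi hni
    simp only [Finset.mem_range] at hi hni
    rw [Nat.choose_eq_zero_of_lt (by omega), zero_mul]
  calc ∑' s : ℕ, (ccount (u+1) (u+1+d) s : ℝ≥0∞) * ((s.factorial : ℝ≥0∞))⁻¹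
      = ∑' s : ℕ, ∑ i ∈ Finset.range (u+1),
          (u.choose i : ℝ≥0∞) * ((s.choose (u+1+d+u - i) : ℝ≥0∞) * ((s.factorial : ℝ≥0∞))⁻¹) := by
        refine tsum_congr fun s => ?_
        rw [ccount_B, h3, Nat.cast_sum, Finset.sum_mul]
        refine Finset.sum_congr rfl fun i _ => ?_
        push_cast
        ring
    _ = ∑ i ∈ Finset.range (u+1), ∑' s : ℕ,
          (u.choose i : ℝ≥0∞) * ((s.choose (u+1+d+u - i) : ℝ≥0∞) * ((s.factorial : ℝ≥0∞))⁻¹) :=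
        Summable.tsum_finsetSum (fun i _ => ENNReal.summable)
    _ = ∑ i ∈ Finset.range (u+1),
          (u.choose i : ℝ≥0∞) *
            ((((u+1+d+u - i).factorial : ℝ≥0∞))⁻¹ * ∑' t : ℕ, ((t.factorial : ℝ≥0∞))⁻¹) := by
        refine Finset.sum_congr rfl fun i _ => ?_
        rw [ENNReal.tsum_mul_left, fact_inv_tsum (u+1+d+u - i)]
    _ = (∑' t : ℕ, ((t.factorial : ℝ≥0∞))⁻¹) *
          ∑ i ∈ Finset.range (u+1),
            (u.choose i : ℝ≥0∞) * (((u+1+d+u - i).factorial : ℝ≥0∞))⁻¹ := by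
        rw [Finset.mul_sum]
        refine Finset.sum_congr rfl fun i _ => ?_
        ring

end

theorem stmt_4 (k j : ℕ) (hj : 1 ≤ j) (hjk : j ≤ k) :
    ∑' n : Fin k → ℕ+,
        (∏ i ∈ Finset.univ.filter (fun i : Fin k => (i : ℕ) < j), (n i : ℝ)) /
          (Nat.factorial (∑ i, (n i : ℕ)))
      = Real.exp 1 *
          ∑ i ∈ Finset.range j, (Nat.choose (j - 1) i : ℝ) / (Nat.factorial (k + j - i - 1)) := by
  obtain ⟨u, rfl⟩ : ∃ u, j = u + 1 := ⟨j - 1, by omega⟩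
  obtain ⟨d, rfl⟩ : ∃ d, k = u + 1 + d := ⟨k - (u + 1), by omega⟩
  have hexp : ∑' t : ℕ, ((t.factorial : ℝ))⁻¹ = Real.exp 1 := by
    rw [Real.exp_eq_exp_ℝ, NormedSpace.exp_eq_tsum_div]
    simp [one_div]
  have hE : (∑' t : ℕ, ((t.factorial : ℝ≥0∞))⁻¹).toReal = Real.exp 1 := by
    rw [ENNReal.tsum_toReal_eq
      (fun t => ENNReal.inv_ne_top.mpr (Nat.cast_ne_zero.mpr t.factorial_pos.ne'))]
    rw [← hexp]
    exact tsum_congr fun t => by simp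
  have hterm : ∀ n : Fin (u+1+d) → ℕ+,
      ((∏ i ∈ Finset.univ.filter (fun i : Fin (u+1+d) => (i : ℕ) < u+1), ((n i : ℕ) : ℝ≥0∞))
        * (((∑ i, (n i : ℕ)).factorial : ℝ≥0∞))⁻¹).toReal
      = (∏ i ∈ Finset.univ.filter (fun i : Fin (u+1+d) => (i : ℕ) < u+1), ((n i : ℕ) : ℝ))
          / ((∑ i, (n i : ℕ)).factorial : ℝ) := by
    intro n
    rw [ENNReal.toReal_mul, ENNReal.toReal_inv, ENNReal.toReal_prod, div_eq_mul_inv]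
    simp
  have hL : ∑' n : Fin (u+1+d) → ℕ+,
      (∏ i ∈ Finset.univ.filter (fun i : Fin (u+1+d) => (i : ℕ) < u+1), ((n i : ℕ) : ℝ))
        / ((∑ i, (n i : ℕ)).factorial : ℝ)
      = (∑' n : Fin (u+1+d) → ℕ+,
          (∏ i ∈ Finset.univ.filter (fun i : Fin (u+1+d) => (i : ℕ) < u+1), ((n i : ℕ) : ℝ≥0∞))
            * (((∑ i, (n i : ℕ)).factorial : ℝ≥0∞))⁻¹).toReal := by
    rw [ENNReal.tsum_toReal_eq (fun n => ENNReal.mul_ne_top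
      (ENNReal.prod_lt_top (fun _ _ => ENNReal.natCast_lt_top _)).ne
      (ENNReal.inv_ne_top.mpr (Nat.cast_ne_zero.mpr (Nat.factorial_pos _).ne')))]
    exact (tsum_congr fun n => (hterm n).symm)
  have hcoe : ∀ n : Fin (u+1+d) → ℕ+,
      (∏ i ∈ Finset.univ.filter (fun i : Fin (u+1+d) => (i : ℕ) < u+1), ((n i : ℕ) : ℝ))
      = ∏ i ∈ Finset.univ.filter (fun i : Fin (u+1+d) => (i : ℕ) < u+1), (n i : ℝ) := by
    intro n
    refine Finset.prod_congr rfl fun i _ => ?_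
    norm_cast
  calc ∑' n : Fin (u+1+d) → ℕ+,
        (∏ i ∈ Finset.univ.filter (fun i : Fin (u+1+d) => (i : ℕ) < u+1), (n i : ℝ))
          / ((∑ i, (n i : ℕ)).factorial : ℝ)
      = ∑' n : Fin (u+1+d) → ℕ+,
        (∏ i ∈ Finset.univ.filter (fun i : Fin (u+1+d) => (i : ℕ) < u+1), ((n i : ℕ) : ℝ))
          / ((∑ i, (n i : ℕ)).factorial : ℝ) := tsum_congr fun n => by rw [hcoe n]
    _ = (∑' n : Fin (u+1+d) → ℕ+,
          (∏ i ∈ Finset.univ.filter (fun i : Fin (u+1+d) => (i : ℕ) < u+1), ((n i : ℕ) : ℝ≥0∞))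
            * (((∑ i, (n i : ℕ)).factorial : ℝ≥0∞))⁻¹).toReal := hL
    _ = ((∑' t : ℕ, ((t.factorial : ℝ≥0∞))⁻¹) *
          ∑ i ∈ Finset.range (u+1),
            (u.choose i : ℝ≥0∞) * (((u+1+d+u - i).factorial : ℝ≥0∞))⁻¹).toReal := by
        rw [grand u d]
    _ = Real.exp 1 * ∑ i ∈ Finset.range (u+1),
          ((u+1-1).choose i : ℝ) / ((u+1+d+(u+1) - i - 1).factorial : ℝ) := by
        rw [ENNReal.toReal_mul, hE]
        congr 1
        rw [ENNReal.toReal_sum (fun i _ => ENNReal.mul_ne_top (ENNReal.natCast_ne_top _)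
          (ENNReal.inv_ne_top.mpr (Nat.cast_ne_zero.mpr (Nat.factorial_pos _).ne')))]
        refine Finset.sum_congr rfl fun i hi => ?_
        have hi' := Finset.mem_range.mp hi
        rw [ENNReal.toReal_mul, ENNReal.toReal_inv, div_eq_mul_inv,
          show u + 1 + d + (u+1) - i - 1 = u+1+d+u - i by omega,
          show u + 1 - 1 = u from rfl]
        simp
end

section
/- For every positive integer k, the series ∑_{n₁=1}^∞ ⋯ ∑_{n_k=1}^∞ 1/(n₁+⋯+n_k)! equals (-1)^k (1 - e·∑_{j=0}^{k-1} (-1)^j / j!). -/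
open Finset

noncomputable def ff (m : ℕ) : ℝ := 1 / m.factorial

lemma ff_nonneg (m : ℕ) : 0 ≤ ff m := by unfold ff; positivity

lemma summable_ff : Summable ff :=
  (Real.summable_pow_div_factorial 1).congr (fun n => by simp [ff])

lemma ff_anti {a b : ℕ} (h : a ≤ b) : ff b ≤ ff a := by
  unfold ff
  apply one_div_le_one_div_of_le
  · exact_mod_cast Nat.factorial_pos a
  · exact_mod_cast Nat.factorial_le h

lemma exp_eq_tsum_ff : Real.exp 1 = ∑' n : ℕ, ff n := by
  rw [Real.exp_eq_exp_ℝ, NormedSpace.exp_eq_tsum_div]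
  simp [ff]

lemma tail_ff (s : ℕ) : ∑' t : ℕ, ff (s + t) = Real.exp 1 - ∑ j ∈ range s, ff j := by
  have h := summable_ff.sum_add_tsum_nat_add s
  have h2 : ∑' t : ℕ, ff (s + t) = ∑' t : ℕ, ff (t + s) :=
    tsum_congr fun t => by rw [add_comm]
  rw [h2, exp_eq_tsum_ff]
  linarith [h]

lemma ff_mul_le (a b : ℕ) : ff (a + b) ≤ ff a * ff b := by
  unfold ff
  rw [div_mul_div_comm, one_mul]
  apply one_div_le_one_div_of_le
  · positivity
  · exact_mod_cast Nat.le_of_dvd (Nat.factorial_pos _)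
      (Nat.factorial_mul_factorial_dvd_factorial_add a b)

lemma summable_prod_ff (k : ℕ) : Summable (fun v : Fin k → ℕ => ∏ i, ff (v i)) := by
  induction k with
  | zero =>
    exact summable_of_finite_support (Set.Finite.subset (Set.finite_univ) (by simp))
  | succ k ih =>
    have h := summable_ff.mul_of_nonneg ih (fun _ => ff_nonneg _)
      (fun v => prod_nonneg fun i _ => ff_nonneg _)
    rw [← (Fin.consEquiv (fun _ : Fin (k+1) => ℕ)).summable_iff]
    simpa [Function.comp_def, Fin.prod_univ_succ] using h

lemma summable_main (k s : ℕ) :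
    Summable (fun v : Fin k → ℕ => ff (s + ∑ i, v i)) := by
  refine (summable_prod_ff k).of_nonneg_of_le (fun v => ff_nonneg _) (fun v => ?_)
  have h2 : (∏ i, (v i).factorial) ≤ (s + ∑ i, v i).factorial :=
    Nat.le_of_dvd (Nat.factorial_pos _)
      ((Nat.prod_factorial_dvd_factorial_sum _ _).trans
        (Nat.factorial_dvd_factorial (Nat.le_add_left _ _)))
  have h3 : (∏ i, ff (v i)) = 1 / (∏ i, ((v i).factorial : ℝ)) := by
    rw [one_div, ← Finset.prod_inv_distrib]
    exact Finset.prod_congr rfl fun i _ => by rw [ff, one_div]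
  rw [h3, ff]
  apply one_div_le_one_div_of_le
  · positivity
  · exact_mod_cast h2

lemma choose_le_two_pow (n r : ℕ) : n.choose r ≤ 2 ^ n := by
  rcases le_or_gt r n with h | h
  · calc n.choose r ≤ ∑ i ∈ range (n+1), n.choose i :=
        Finset.single_le_sum (fun i _ => Nat.zero_le _) (by simp [Nat.lt_succ_of_le h])
      _ = 2 ^ n := Nat.sum_range_choose n
  · rw [Nat.choose_eq_zero_of_lt h]; positivity

lemma choose_nonneg_r (n r : ℕ) : (0:ℝ) ≤ (n.choose r : ℝ) := by positivity

lemma summable_choose (r a s : ℕ) :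
    Summable (fun j : ℕ => ((j + a).choose r : ℝ) * ff (s + j)) := by
  have h : Summable (fun j : ℕ => (2:ℝ) ^ a * (2 ^ j / j.factorial)) :=
    (Real.summable_pow_div_factorial 2).mul_left _
  refine h.of_nonneg_of_le
    (fun j => mul_nonneg (choose_nonneg_r _ _) (ff_nonneg _)) (fun j => ?_)
  have hc : ((j + a).choose r : ℝ) ≤ 2 ^ a * 2 ^ j := by
    calc ((j + a).choose r : ℝ) ≤ (2:ℝ) ^ (j + a) := by
          exact_mod_cast choose_le_two_pow (j + a) r
      _ = 2 ^ a * 2 ^ j := by rw [pow_add]; ring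
  calc ((j + a).choose r : ℝ) * ff (s + j) ≤ (2 ^ a * 2 ^ j) * ff j := by
        apply mul_le_mul hc (ff_anti (Nat.le_add_left _ _)) (ff_nonneg _) (by positivity)
    _ = 2 ^ a * (2 ^ j / j.factorial) := by rw [ff]; ring

lemma summable_pair (r a s : ℕ) :
    Summable (fun p : ℕ × ℕ => ((p.2 + a).choose r : ℝ) * ff (s + p.1 + p.2)) := by
  have h := summable_ff.mul_of_nonneg (summable_choose r a 0)
    (fun _ => ff_nonneg _) (fun j => mul_nonneg (choose_nonneg_r _ _) (ff_nonneg _))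
  refine h.of_nonneg_of_le
    (fun p => mul_nonneg (choose_nonneg_r _ _) (ff_nonneg _)) (fun p => ?_)
  calc ((p.2 + a).choose r : ℝ) * ff (s + p.1 + p.2)
      ≤ ((p.2 + a).choose r : ℝ) * (ff p.1 * ff p.2) := by
        apply mul_le_mul_of_nonneg_left _ (choose_nonneg_r _ _)
        exact (ff_anti (by omega : p.1 + p.2 ≤ s + p.1 + p.2)).trans (ff_mul_le p.1 p.2)
    _ = ff p.1 * (((p.2 + a).choose r : ℝ) * ff (0 + p.2)) := by rw [zero_add]; ring

lemma hockey_s5 (r m : ℕ) :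
    ∑ j ∈ range (m+1), ((j + r).choose r) = (m + r + 1).choose (r + 1) := by
  induction m with
  | zero => simp
  | succ m ih =>
    rw [Finset.sum_range_succ, ih, show m + 1 + r = m + r + 1 from by omega,
      Nat.choose_succ_succ (m + r + 1) r]
    simp only [Nat.succ_eq_add_one]
    omega

set_option maxHeartbeats 1000000 in
lemma regroup (r s : ℕ) :
    ∑' t : ℕ, ∑' j : ℕ, ((j + r).choose r : ℝ) * ff (s + t + j)
      = ∑' m : ℕ, ((m + r + 1).choose (r + 1) : ℝ) * ff (s + m) := by
  have hs : Summable (fun p : ℕ × ℕ => ((p.2 + r).choose r : ℝ) * ff (s + p.1 + p.2)) :=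
    summable_pair r r s
  have hse : Summable (fun x : Σ n : ℕ, {p : ℕ × ℕ // p ∈ Finset.HasAntidiagonal.antidiagonal n} =>
      ((((Finset.HasAntidiagonal.sigmaAntidiagonalEquivProd x : ℕ × ℕ)).2 + r).choose r : ℝ)
        * ff (s + (Finset.HasAntidiagonal.sigmaAntidiagonalEquivProd x : ℕ × ℕ).1
            + (Finset.HasAntidiagonal.sigmaAntidiagonalEquivProd x : ℕ × ℕ).2)) :=
    Finset.HasAntidiagonal.sigmaAntidiagonalEquivProd.summable_iff.2 hs
  calc ∑' t : ℕ, ∑' j : ℕ, ((j + r).choose r : ℝ) * ff (s + t + j)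
      = ∑' p : ℕ × ℕ, ((p.2 + r).choose r : ℝ) * ff (s + p.1 + p.2) := hs.tsum_prod.symm
    _ = ∑' x : Σ n : ℕ, {p : ℕ × ℕ // p ∈ Finset.HasAntidiagonal.antidiagonal n},
          ((((Finset.HasAntidiagonal.sigmaAntidiagonalEquivProd x : ℕ × ℕ)).2 + r).choose r : ℝ)
            * ff (s + (Finset.HasAntidiagonal.sigmaAntidiagonalEquivProd x : ℕ × ℕ).1
                + (Finset.HasAntidiagonal.sigmaAntidiagonalEquivProd x : ℕ × ℕ).2) :=
        (Finset.HasAntidiagonal.sigmaAntidiagonalEquivProd.tsum_eq _).symm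
    _ = ∑' n : ℕ, ∑' p : {p : ℕ × ℕ // p ∈ Finset.HasAntidiagonal.antidiagonal n},
          ((((Finset.HasAntidiagonal.sigmaAntidiagonalEquivProd ⟨n, p⟩ : ℕ × ℕ)).2 + r).choose r : ℝ)
            * ff (s + (Finset.HasAntidiagonal.sigmaAntidiagonalEquivProd ⟨n, p⟩ : ℕ × ℕ).1
                + (Finset.HasAntidiagonal.sigmaAntidiagonalEquivProd ⟨n, p⟩ : ℕ × ℕ).2) := hse.tsum_sigma
    _ = ∑' m : ℕ, ((m + r + 1).choose (r + 1) : ℝ) * ff (s + m) := by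
        apply tsum_congr
        intro n
        have key : ∀ p : {p : ℕ × ℕ // p ∈ Finset.HasAntidiagonal.antidiagonal n},
            ((((Finset.HasAntidiagonal.sigmaAntidiagonalEquivProd ⟨n, p⟩ : ℕ × ℕ)).2 + r).choose r : ℝ)
              * ff (s + (Finset.HasAntidiagonal.sigmaAntidiagonalEquivProd ⟨n, p⟩ : ℕ × ℕ).1
                  + (Finset.HasAntidiagonal.sigmaAntidiagonalEquivProd ⟨n, p⟩ : ℕ × ℕ).2)
              = (((p : ℕ × ℕ).2 + r).choose r : ℝ) * ff (s + n) := by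
          rintro ⟨⟨p1, p2⟩, hp⟩
          rw [Finset.HasAntidiagonal.mem_antidiagonal] at hp
          show ((p2 + r).choose r : ℝ) * ff (s + p1 + p2)
              = ((p2 + r).choose r : ℝ) * ff (s + n)
          rw [add_assoc, hp]
        rw [tsum_congr key]
        calc ∑' p : {p : ℕ × ℕ // p ∈ Finset.HasAntidiagonal.antidiagonal n},
              (((p : ℕ × ℕ).2 + r).choose r : ℝ) * ff (s + n)
            = ∑ p ∈ Finset.HasAntidiagonal.antidiagonal n, ((p.2 + r).choose r : ℝ) * ff (s + n) :=
              Finset.tsum_subtype (Finset.HasAntidiagonal.antidiagonal n)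
                (fun p : ℕ × ℕ => ((p.2 + r).choose r : ℝ) * ff (s + n))
          _ = (∑ p ∈ Finset.HasAntidiagonal.antidiagonal n, ((p.2 + r).choose r : ℝ)) * ff (s + n) := by
              rw [← Finset.sum_mul]
          _ = ((n + r + 1).choose (r + 1) : ℝ) * ff (s + n) := by
              congr 1
              rw [Finset.Nat.sum_antidiagonal_eq_sum_range_succ_mk, ← hockey_s5 r n]
              push_cast
              rw [← Finset.sum_range_reflect]
              apply Finset.sum_congr rfl
              intro i hi
              rw [Finset.mem_range] at hi
              congr 2
              omega

lemma keyP (r : ℕ) : ∀ s : ℕ,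
    ∑' v : Fin (r+1) → ℕ, ff (s + ∑ i, v i)
      = ∑' j : ℕ, ((j + r).choose r : ℝ) * ff (s + j) := by
  induction r with
  | zero =>
    intro s
    calc ∑' v : Fin 1 → ℕ, ff (s + ∑ i, v i)
        = ∑' n : ℕ, ff (s + ∑ i : Fin 1, (Equiv.funUnique (Fin 1) ℕ).symm n i) :=
          ((Equiv.funUnique (Fin 1) ℕ).symm.tsum_eq _).symm
      _ = ∑' j : ℕ, ((j + 0).choose 0 : ℝ) * ff (s + j) := by
          apply tsum_congr
          intro n
          simp [Equiv.funUnique]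
  | succ r ih =>
    intro s
    set E := Fin.consEquiv (fun _ : Fin (r+2) => ℕ) with hE
    have hsum : Summable (fun p : ℕ × (Fin (r+1) → ℕ) => ff (s + ∑ i, E p i)) :=
      E.summable_iff.2 (summable_main (r+2) s)
    have step1 : ∀ t : ℕ, ∑' w : Fin (r+1) → ℕ, ff (s + ∑ i, E (t, w) i)
        = ∑' j : ℕ, ((j + r).choose r : ℝ) * ff (s + t + j) := by
      intro t
      have hcongr : ∀ w : Fin (r+1) → ℕ,
          ff (s + ∑ i, E (t, w) i) = ff ((s + t) + ∑ i, w i) := by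
        intro w
        congr 1
        show s + ∑ i, (Fin.cons t w : Fin (r+2) → ℕ) i = s + t + ∑ i, w i
        rw [Fin.sum_cons]
        omega
      rw [tsum_congr hcongr, ih (s + t)]
    calc ∑' v : Fin (r+2) → ℕ, ff (s + ∑ i, v i)
        = ∑' p : ℕ × (Fin (r+1) → ℕ), ff (s + ∑ i, E p i) :=
          (E.tsum_eq (fun v : Fin (r+2) → ℕ => ff (s + ∑ i, v i))).symm
      _ = ∑' (t : ℕ) (w : Fin (r+1) → ℕ), ff (s + ∑ i, E (t, w) i) := hsum.tsum_prod
      _ = ∑' (t : ℕ) (j : ℕ), ((j + r).choose r : ℝ) * ff (s + t + j) := tsum_congr step1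
      _ = ∑' m : ℕ, ((m + r + 1).choose (r + 1) : ℝ) * ff (s + m) := regroup r s
      _ = ∑' j : ℕ, ((j + (r+1)).choose (r+1) : ℝ) * ff (s + j) := by
          apply tsum_congr
          intro m
          rw [show m + (r+1) = m + r + 1 from by omega]

lemma pnat_to_nat (k : ℕ) :
    ∑' n : Fin k → ℕ+, ff (∑ i, (n i : ℕ)) = ∑' v : Fin k → ℕ, ff (k + ∑ i, v i) := by
  rw [← (Equiv.piCongrRight (fun _ : Fin k => Equiv.pnatEquivNat.symm)).tsum_eq
    (fun n : Fin k → ℕ+ => ff (∑ i, (n i : ℕ)))]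
  apply tsum_congr
  intro v
  congr 1
  show ∑ i, ((Nat.succPNat (v i) : ℕ+) : ℕ) = k + ∑ i, v i
  simp only [Nat.succPNat_coe, Nat.succ_eq_add_one]
  rw [Finset.sum_add_distrib]
  simp [Finset.card_univ, add_comm]

noncomputable def T (r : ℕ) : ℝ := ∑' j : ℕ, ((j + r).choose r : ℝ) * ff (r + 1 + j)

lemma T_zero : T 0 = Real.exp 1 - 1 := by
  unfold T
  have h : ∀ j : ℕ, ((j + 0).choose 0 : ℝ) * ff (0 + 1 + j) = ff (1 + j) := by
    intro j; simp
  rw [tsum_congr h, tail_ff 1]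
  simp [ff]

lemma exact_value (r j : ℕ) :
    ((j + r + 2).choose (r + 1) : ℝ) * ff (r + 2 + j) = (1 / (r+1).factorial) * ff (1 + j) := by
  have key : (j + r + 2).choose (r + 1) * ((r + 1).factorial * (j + 1).factorial)
      = (j + r + 2).factorial := by
    have h := Nat.choose_mul_factorial_mul_factorial
      (show r + 1 ≤ j + r + 2 by omega) (n := j + r + 2)
    have h2 : j + r + 2 - (r + 1) = j + 1 := by omega
    rw [h2] at h
    rw [← h]; ring
  have h1 : ff (r + 2 + j) = 1 / ((j + r + 2).factorial : ℝ) := by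
    rw [ff, show r + 2 + j = j + r + 2 from by omega]
  have h2 : ff (1 + j) = 1 / ((j + 1).factorial : ℝ) := by
    rw [ff, show 1 + j = j + 1 from by omega]
  rw [h1, h2]
  have key' : ((j + r + 2).choose (r + 1) : ℝ) * (((r + 1).factorial : ℝ) * ((j + 1).factorial : ℝ))
      = ((j + r + 2).factorial : ℝ) := by exact_mod_cast key
  have hf1 : (0:ℝ) < ((r + 1).factorial : ℝ) := by exact_mod_cast Nat.factorial_pos _
  have hf2 : (0:ℝ) < ((j + 1).factorial : ℝ) := by exact_mod_cast Nat.factorial_pos _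
  have hf3 : (0:ℝ) < ((j + r + 2).factorial : ℝ) := by exact_mod_cast Nat.factorial_pos _
  field_simp
  linarith [key']

lemma T_rec (r : ℕ) : T r + T (r + 1) = Real.exp 1 / (r + 1).factorial := by
  have hsummable : Summable (fun j : ℕ => ((j + r).choose r : ℝ) * ff (r + 1 + j)) :=
    summable_choose r r (r + 1)
  have peel : T r = ff (r + 1)
      + ∑' j : ℕ, (((j + r + 1).choose r : ℝ)) * ff (r + 2 + j) := by
    unfold T
    rw [hsummable.tsum_eq_zero_add]
    have e0 : ((0 + r).choose r : ℝ) * ff (r + 1 + 0) = ff (r + 1) := by simp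
    rw [e0]
    congr 1
    apply tsum_congr
    intro j
    rw [show j + 1 + r = j + r + 1 from by omega, show r + 1 + (j + 1) = r + 2 + j from by omega]
  have h1 : Summable (fun j : ℕ => ((j + r + 1).choose r : ℝ) * ff (r + 2 + j)) :=
    (summable_choose r (r + 1) (r + 2)).congr
      (fun j => by rw [show j + (r + 1) = j + r + 1 from by omega])
  have h2 : Summable (fun j : ℕ => ((j + r + 1).choose (r + 1) : ℝ) * ff (r + 2 + j)) :=
    (summable_choose (r + 1) (r + 1) (r + 2)).congr
      (fun j => by rw [show j + (r + 1) = j + r + 1 from by omega])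
  have hT1 : T (r + 1) = ∑' j : ℕ, ((j + r + 1).choose (r + 1) : ℝ) * ff (r + 2 + j) := by
    unfold T
    apply tsum_congr
    intro j
    rw [show j + (r + 1) = j + r + 1 from by omega,
      show r + 1 + 1 + j = r + 2 + j from by omega]
  rw [peel, hT1, add_assoc, ← h1.tsum_add h2]
  have combine : ∀ j : ℕ,
      ((j + r + 1).choose r : ℝ) * ff (r + 2 + j)
        + ((j + r + 1).choose (r + 1) : ℝ) * ff (r + 2 + j)
        = (1 / (r+1).factorial) * ff (1 + j) := by
    intro j
    rw [← add_mul, ← exact_value r j]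
    congr 1
    rw [← Nat.cast_add, ← Nat.choose_succ_succ (j + r + 1) r,
      show j + r + 1 + 1 = j + r + 2 from by omega]
  rw [tsum_congr combine, tsum_mul_left, tail_ff 1]
  have hval : ff (r + 1) = 1 / ((r+1).factorial : ℝ) := rfl
  rw [hval]
  have hf1 : (0:ℝ) < ((r + 1).factorial : ℝ) := by exact_mod_cast Nat.factorial_pos _
  have hff0 : ∑ j ∈ range 1, ff j = 1 := by simp [ff]
  rw [hff0]
  field_simp
  ring

lemma T_form (r : ℕ) :
    T r = (-1 : ℝ) ^ (r + 1) *
      (1 - Real.exp 1 * ∑ j ∈ range (r + 1), (-1 : ℝ) ^ j / (Nat.factorial j)) := by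
  induction r with
  | zero =>
    rw [T_zero]
    rw [Finset.sum_range_one]
    norm_num
  | succ r ih =>
    have hrec := T_rec r
    have hT : T (r + 1) = Real.exp 1 / (r + 1).factorial - T r := by linarith
    rw [hT, ih,
      Finset.sum_range_succ (f := fun j => (-1:ℝ) ^ j / (Nat.factorial j)) (n := r + 1)]
    have ha : ((-1 : ℝ) ^ r) * ((-1 : ℝ) ^ r) = 1 := by
      rw [← pow_add, ← two_mul, pow_mul]
      norm_num
    have hf1 : ((r + 1).factorial : ℝ) ≠ 0 := by
      exact_mod_cast (Nat.factorial_pos (r+1)).ne'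
    simp only [pow_succ]
    rcases mul_self_eq_one_iff.mp ha with h | h <;> rw [h] <;> field_simp <;> ring

theorem stmt_5 (k : ℕ) (hk : 1 ≤ k) :
    ∑' n : Fin k → ℕ+, (1 : ℝ) / (Nat.factorial (∑ i, (n i : ℕ)))
      = (-1) ^ k *
          (1 - Real.exp 1 * ∑ j ∈ Finset.range k, (-1 : ℝ) ^ j / (Nat.factorial j)) := by
  obtain ⟨r, rfl⟩ : ∃ r, k = r + 1 := ⟨k - 1, by omega⟩
  have lhs_eq : ∑' n : Fin (r+1) → ℕ+, (1 : ℝ) / (Nat.factorial (∑ i, (n i : ℕ)))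
      = T r := by
    have e1 : ∑' n : Fin (r+1) → ℕ+, (1 : ℝ) / (Nat.factorial (∑ i, (n i : ℕ)))
        = ∑' n : Fin (r+1) → ℕ+, ff (∑ i, (n i : ℕ)) := rfl
    rw [e1, pnat_to_nat (r+1), keyP r (r+1)]
    rfl
  rw [lhs_eq, T_form r]
end

section
/- For every positive integer k, the series ∑_{n₁=1}^∞ ⋯ ∑_{n_k=1}^∞ n₁/(n₁+⋯+n_k)! equals e/k!. -/
open Finset Finset.Nat

-- cardinality of antidiagonalTuple
lemma adt_card : ∀ (k n : ℕ), (antidiagonalTuple (k+1) n).card = (n+k).choose k := by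
  intro k
  induction k with
  | zero => intro n; simp
  | succ k ih =>
    intro n
    rw [Finset.card_eq_sum_card_fiberwise (f := fun x => x 0) (t := Finset.range (n+1))
      (fun x hx => by
        rw [Finset.mem_coe, mem_antidiagonalTuple] at hx
        have : x 0 ≤ n := hx ▸ Finset.single_le_sum (fun i _ => Nat.zero_le (x i)) (mem_univ 0)
        simpa using Nat.lt_succ_of_le this)]
    have hfib : ∀ i ∈ Finset.range (n+1),
        ((antidiagonalTuple (k+1+1) n).filter (fun x => x 0 = i)).card
        = (antidiagonalTuple (k+1) (n - i)).card := by
      intro i hi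
      rw [Finset.mem_range, Nat.lt_succ_iff] at hi
      apply Finset.card_bij (fun x _ => Fin.tail x)
      · intro x hx
        rw [Finset.mem_filter, mem_antidiagonalTuple] at hx
        rw [mem_antidiagonalTuple]
        have h1 := hx.1
        rw [Fin.sum_univ_succ] at h1
        have h2 : ∑ j : Fin (k+1), Fin.tail x j = ∑ j : Fin (k+1), x j.succ := rfl
        omega
      · intro x hx y hy h
        rw [Finset.mem_filter] at hx hy
        have : Fin.cons (x 0) (Fin.tail x) = Fin.cons (y 0) (Fin.tail y) := by
          rw [hx.2, hy.2, h]
        simpa [Fin.cons_self_tail] using this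
      · intro y hy
        rw [mem_antidiagonalTuple] at hy
        refine ⟨Fin.cons i y, ?_, ?_⟩
        · rw [Finset.mem_filter, mem_antidiagonalTuple, Fin.sum_cons, hy]
          exact ⟨by omega, rfl⟩
        · simp [Fin.tail_cons]
    rw [Finset.sum_congr rfl hfib]
    simp only [ih]
    have := Finset.sum_range_reflect (fun j => (j + (k+1)).choose (k+1)) (n+1)
    calc ∑ i ∈ Finset.range (n+1), (n - i + k).choose k
        = ∑ i ∈ Finset.range (n+1), (i + k).choose k := by
          rw [← Finset.sum_range_reflect]
          apply Finset.sum_congr rfl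
          intro i hi
          rw [Finset.mem_range] at hi
          congr 2
          omega
      _ = (n + (k+1)).choose (k+1) := by
          rw [Nat.sum_range_add_choose, Nat.add_assoc]

-- symmetry
lemma adt_sum_coord_eq (k n : ℕ) (i j : Fin k) :
    ∑ x ∈ antidiagonalTuple k n, x i = ∑ x ∈ antidiagonalTuple k n, x j := by
  apply Finset.sum_bij (fun x _ => x ∘ Equiv.swap i j)
  · intro x hx
    rw [mem_antidiagonalTuple] at hx ⊢
    rw [← hx]
    exact Fintype.sum_equiv (Equiv.swap i j) _ _ (fun t => rfl)
  · intro x hx y hy h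
    funext t
    have := congrFun h (Equiv.swap i j t)
    simpa [Equiv.swap_apply_self] using this
  · intro y hy
    refine ⟨y ∘ Equiv.swap i j, ?_, ?_⟩
    · rw [mem_antidiagonalTuple] at hy ⊢
      rw [← hy]
      exact Fintype.sum_equiv (Equiv.swap i j) _ _ (fun t => rfl)
    · funext t
      simp [Equiv.swap_apply_self]
  · intro x hx
    simp [Equiv.swap_apply_right]

lemma adt_sum_coord (k n : ℕ) (i0 : Fin k) :
    k * ∑ x ∈ antidiagonalTuple k n, x i0 = n * (antidiagonalTuple k n).card := by
  have h1 : ∑ i : Fin k, ∑ x ∈ antidiagonalTuple k n, x i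
      = ∑ x ∈ antidiagonalTuple k n, ∑ i : Fin k, x i := Finset.sum_comm
  have h2 : ∑ x ∈ antidiagonalTuple k n, ∑ i : Fin k, x i
      = ∑ x ∈ antidiagonalTuple k n, n :=
    Finset.sum_congr rfl (fun x hx => mem_antidiagonalTuple.mp hx)
  have h3 : ∑ i : Fin k, ∑ x ∈ antidiagonalTuple k n, x i
      = ∑ _i : Fin k, ∑ x ∈ antidiagonalTuple k n, x i0 :=
    Finset.sum_congr rfl (fun i _ => adt_sum_coord_eq k n i i0)
  have h4 := h3.symm.trans (h1.trans h2)
  simpa [Finset.sum_const, mul_comm] using h4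

-- inner fiber value
lemma adt_inner_val (k N : ℕ) (hk : 1 ≤ k) (i0 : Fin k) :
    ∑ x ∈ antidiagonalTuple k N, ((x i0 : ℝ) + 1) / (N + k).factorial
      = 1 / (k.factorial * N.factorial) := by
  obtain ⟨j, rfl⟩ : ∃ j, k = j + 1 := ⟨k - 1, by omega⟩
  set A := antidiagonalTuple (j+1) N with hA
  have hsum : ((j:ℝ)+1) * ∑ x ∈ A, (x i0 : ℝ) = N * A.card := by
    have h := adt_sum_coord (j+1) N i0
    have h2 : (((j+1) * ∑ x ∈ A, x i0 : ℕ) : ℝ) = ((N * A.card : ℕ) : ℝ) := by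
      exact_mod_cast congrArg (Nat.cast : ℕ → ℝ) h
    push_cast at h2
    linarith
  have hC : (A.card : ℝ) * j.factorial * N.factorial = (N+j).factorial := by
    have h1 : A.card = (N+j).choose j := adt_card j N
    have h2 : (N+j).choose j * j.factorial * (N + j - j).factorial = (N+j).factorial :=
      Nat.choose_mul_factorial_mul_factorial (Nat.le_add_left j N)
    rw [h1]
    exact_mod_cast (by simpa using h2)
  have hF : ((N + (j+1)).factorial : ℝ) = ((N:ℝ)+j+1) * (N+j).factorial := by
    have : N + (j+1) = (N+j) + 1 := by omega
    rw [this, Nat.factorial_succ]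
    push_cast
    ring
  have hK : (((j+1).factorial : ℕ) : ℝ) = ((j:ℝ)+1) * j.factorial := by
    rw [Nat.factorial_succ]; push_cast; ring
  rw [← Finset.sum_div, Finset.sum_add_distrib, Finset.sum_const, nsmul_eq_mul, mul_one]
  have hFne : ((N + (j+1)).factorial : ℝ) ≠ 0 := by positivity
  have hKne : (((j+1).factorial : ℕ) : ℝ) ≠ 0 := by positivity
  have hNne : ((N.factorial : ℕ) : ℝ) ≠ 0 := by positivity
  field_simp
  rw [hF, hK]
  linear_combination ((j.factorial : ℝ) * (N.factorial : ℝ)) * hsum + ((N:ℝ)+j+1) * hC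

theorem stmt_6 (k : ℕ) (hk : 1 ≤ k) :
    ∑' n : Fin k → ℕ+,
        (n ⟨0, hk⟩ : ℝ) / (Nat.factorial (∑ i, (n i : ℕ)))
      = Real.exp 1 / (Nat.factorial k) := by
  set i0 : Fin k := ⟨0, hk⟩ with hi0
  set F : (Fin k → ℕ+) → ℝ := fun n => (n i0 : ℝ) / (Nat.factorial (∑ i, (n i : ℕ))) with hF
  set f : (Fin k → ℕ) → ℝ := fun m => ((m i0 : ℝ) + 1) / (∑ i, m i + k).factorial with hf
  set e : (Fin k → ℕ) ≃ (Fin k → ℕ+) :=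
    Equiv.piCongrRight (fun _ => Equiv.pnatEquivNat.symm) with he
  have key : ∀ m : Fin k → ℕ, F (e m) = f m := by
    intro m
    have h1 : ∀ i, ((e m i : ℕ+) : ℕ) = m i + 1 := fun i => rfl
    have h2 : ∑ i, ((e m i : ℕ+) : ℕ) = (∑ i, m i) + k := by
      simp only [h1, Finset.sum_add_distrib, Finset.sum_const, Finset.card_univ,
        Fintype.card_fin, smul_eq_mul, mul_one]
    simp only [hF, hf, h2]
    congr 1
    rw [show ((e m i0 : ℕ+) : ℝ) = (((e m i0 : ℕ+) : ℕ) : ℝ) from rfl, h1 i0]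
    push_cast
    ring
  have step1 : (∑' n : Fin k → ℕ+, F n) = ∑' m : Fin k → ℕ, f m := by
    rw [← Equiv.tsum_eq e F, tsum_congr key]
  set g : (Σ N : ℕ, Finset.Nat.antidiagonalTuple k N) → ℝ :=
    fun p => ((p.2.1 i0 : ℝ) + 1) / ((p.1 + k).factorial : ℝ) with hg
  have hfe : ∀ p, f ((Finset.Nat.sigmaAntidiagonalTupleEquivTuple k) p) = g p := by
    rintro ⟨N, x, hx⟩
    rw [mem_antidiagonalTuple] at hx
    simp only [hf, hg, Finset.Nat.sigmaAntidiagonalTupleEquivTuple_apply, hx]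
  have step2 : (∑' m : Fin k → ℕ, f m) = ∑' p, g p := by
    rw [← (Finset.Nat.sigmaAntidiagonalTupleEquivTuple k).tsum_eq f, tsum_congr hfe]
  have hg0 : ∀ p, 0 ≤ g p := by
    rintro ⟨N, x, hx⟩
    apply div_nonneg _ (by positivity)
    positivity
  have hfib : ∀ N, Summable (fun t : antidiagonalTuple k N => g ⟨N, t⟩) :=
    fun N => Summable.of_finite
  have hval : ∀ N : ℕ, (∑' t : antidiagonalTuple k N, g ⟨N, t⟩)
      = 1 / ((k.factorial : ℝ) * N.factorial) := by
    intro N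
    rw [tsum_fintype]
    rw [Finset.sum_coe_sort (antidiagonalTuple k N)
      (fun x => ((x i0 : ℝ) + 1) / ((N + k).factorial : ℝ))]
    exact adt_inner_val k N hk i0
  have houter : Summable (fun N : ℕ => 1 / ((k.factorial : ℝ) * N.factorial)) := by
    have h := (Real.summable_pow_div_factorial 1).mul_left (1 / (k.factorial : ℝ))
    apply h.congr
    intro N
    rw [one_pow]
    rw [div_mul_div_comm, one_mul]
  have hsumg : Summable g := (summable_sigma_of_nonneg hg0).mpr
    ⟨hfib, by
      apply houter.congr
      intro N
      exact (hval N).symm⟩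
  have step3 : (∑' p, g p) = ∑' N : ℕ, 1 / ((k.factorial : ℝ) * N.factorial) := by
    rw [hsumg.tsum_sigma' hfib]
    exact tsum_congr hval
  have hexp : (∑' N : ℕ, 1 / ((N.factorial : ℕ) : ℝ)) = Real.exp 1 := by
    rw [Real.exp_eq_exp_ℝ, NormedSpace.exp_eq_tsum ℝ]
    congr 1
    funext N
    rw [one_pow, smul_eq_mul, mul_one, one_div]
  have step4 : (∑' N : ℕ, 1 / ((k.factorial : ℝ) * N.factorial))
      = Real.exp 1 / (k.factorial : ℝ) := by
    have : ∀ N : ℕ, 1 / ((k.factorial : ℝ) * N.factorial)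
        = (1 / (k.factorial : ℝ)) * (1 / ((N.factorial : ℕ) : ℝ)) := by
      intro N
      rw [div_mul_div_comm, one_mul]
    rw [tsum_congr this, tsum_mul_left, hexp]
    ring
  rw [step1, step2, step3, step4]
end

section
/- For every positive integer k, ∑_{n₁=1}^∞ ⋯ ∑_{n_k=1}^∞ 1/(n₁+⋯+n_k)! = (1/(k-1)!) · f^{(k-1)}(1), where f(z) = (e^z - 1)/z (extended by f(0) = 1). -/
/-- The entire function `f(z) = (e^z - 1)/z`, extended by `f(0) = 1`. -/
noncomputable def expm1Div (z : ℝ) : ℝ := if z = 0 then 1 else (Real.exp z - 1) / z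

noncomputable def G : ℕ → ℝ → ℝ
  | 0 => fun x => (Real.exp x - 1) / x
  | (j+1) => fun x => (Real.exp x - ((j:ℝ)+1) * G j x) / x

lemma G_hasDerivAt : ∀ j : ℕ, ∀ x : ℝ, x ≠ 0 → HasDerivAt (G j) (G (j+1) x) x := by
  intro j
  induction j with
  | zero =>
      intro x hx
      have h : HasDerivAt (G 0) _ x := (((Real.hasDerivAt_exp x).sub_const 1).div (hasDerivAt_id x) hx)
      convert h using 1
      simp only [G, id_eq]
      rw [div_eq_div_iff hx (pow_ne_zero 2 hx)]
      field_simp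
      ring
  | succ j ih =>
      intro x hx
      have hnum : HasDerivAt (fun x => Real.exp x - ((j:ℝ)+1) * G j x)
          (Real.exp x - ((j:ℝ)+1) * G (j+1) x) x :=
        (Real.hasDerivAt_exp x).sub ((ih x hx).const_mul _)
      have h : HasDerivAt (G (j+1)) _ x := hnum.div (hasDerivAt_id x) hx
      convert h using 1
      simp only [G, id_eq]
      rw [div_eq_div_iff hx (pow_ne_zero 2 hx)]
      field_simp
      push_cast
      ring

lemma iteratedDeriv_expm1Div : ∀ j : ℕ, ∀ x : ℝ, x ≠ 0 →
    iteratedDeriv j expm1Div x = G j x := by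
  intro j
  induction j with
  | zero =>
      intro x hx
      simp [expm1Div, G, hx]
  | succ j ih =>
      intro x hx
      rw [iteratedDeriv_succ]
      have hopen : IsOpen {x : ℝ | x ≠ 0} := isOpen_compl_singleton
      have hev : iteratedDeriv j expm1Div =ᶠ[nhds x] G j := by
        filter_upwards [hopen.mem_nhds hx] with y hy using ih y hy
      rw [hev.deriv_eq, (G_hasDerivAt j x hx).deriv]


lemma summable_one_div_fact : Summable (fun m : ℕ => (1:ℝ) / m.factorial) := by
  simpa using Real.summable_pow_div_factorial 1

lemma exp_one_eq : Real.exp 1 = ∑' n : ℕ, (1:ℝ) / n.factorial := by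
  rw [Real.exp_eq_exp_ℝ, NormedSpace.exp_eq_tsum_div]
  simp

lemma choose_fact_le (m j : ℕ) : (m+j).choose j * m.factorial ≤ (m+j+1).factorial := by
  have h : (m+j).choose j * j.factorial * m.factorial = (m+j).factorial := by
    have := Nat.choose_mul_factorial_mul_factorial (Nat.le_add_left j m)
    simpa [Nat.add_sub_cancel] using this
  calc (m+j).choose j * m.factorial ≤ (m+j).choose j * j.factorial * m.factorial := by
        have := Nat.one_le_iff_ne_zero.mpr (Nat.factorial_ne_zero j)
        nlinarith [Nat.factorial_pos m, (m+j).choose j]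
    _ = (m+j).factorial := h
    _ ≤ (m+j+1).factorial := Nat.factorial_le (Nat.le_succ _)

lemma term_le (m j : ℕ) :
    ((m+j).choose j : ℝ) / (m+j+1).factorial ≤ 1 / m.factorial := by
  rw [div_le_div_iff₀ (by positivity) (by positivity)]
  have := choose_fact_le m j
  calc ((m+j).choose j : ℝ) * m.factorial = (((m+j).choose j * m.factorial : ℕ) : ℝ) := by push_cast; ring
    _ ≤ ((m+j+1).factorial : ℝ) := by exact_mod_cast this
    _ = 1 * (m+j+1).factorial := (one_mul _).symm

lemma R_summable (j : ℕ) :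
    Summable (fun m : ℕ => ((m+j).choose j : ℝ) / (m+j+1).factorial) :=
  Summable.of_nonneg_of_le (fun m => by positivity) (fun m => term_le m j)
    summable_one_div_fact

noncomputable def Rser (j : ℕ) : ℝ := ∑' m : ℕ, ((m+j).choose j : ℝ) / (m+j+1).factorial

lemma tail_exp : ∑' m : ℕ, (1:ℝ) / (m+1).factorial = Real.exp 1 - 1 := by
  have h := Summable.tsum_eq_zero_add summable_one_div_fact
  rw [exp_one_eq, h]
  simp

lemma Rser_zero : Rser 0 = Real.exp 1 - 1 := by
  rw [Rser, ← tail_exp]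
  exact tsum_congr fun m => by simp

lemma Rser_rec (j : ℕ) : Rser (j+1) + Rser j = Real.exp 1 / (j+1).factorial := by
  have hshift : Summable (fun m : ℕ => ((m+1+j).choose j : ℝ) / (m+1+j+1).factorial) := by
    have := (summable_nat_add_iff (f := fun m : ℕ => ((m+j).choose j : ℝ) / (m+j+1).factorial) 1).2 (R_summable j)
    refine this.congr fun m => ?_
    ring_nf
  have hj : Rser j = (1:ℝ) / (j+1).factorial
      + ∑' m : ℕ, ((m+1+j).choose j : ℝ) / (m+1+j+1).factorial := by
    rw [Rser, Summable.tsum_eq_zero_add (R_summable j)]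
    congr 1
    · simp
  have key : ∀ m : ℕ, ((m+(j+1)).choose (j+1) : ℝ) / (m+(j+1)+1).factorial
      + ((m+1+j).choose j : ℝ) / (m+1+j+1).factorial
      = (1 / (j+1).factorial) * (1 / (m+1).factorial) := by
    intro m
    have harr : m+1+j+1 = m+(j+1)+1 := by omega
    have hch : ((m+(j+1)+1).choose (j+1) : ℕ) * (j+1).factorial * (m+1).factorial
        = (m+(j+1)+1).factorial := by
      have := Nat.choose_mul_factorial_mul_factorial
        (n := m+(j+1)+1) (k := j+1) (by omega)
      simpa [show m+(j+1)+1-(j+1) = m+1 by omega] using this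
    have hpascal : (m+(j+1)+1).choose (j+1)
        = (m+1+j).choose j + (m+(j+1)).choose (j+1) := by
      have e0 : m+(j+1)+1 = (m+j+1)+1 := by omega
      have e1 : m+1+j = m+j+1 := by omega
      have e2 : m+(j+1) = m+j+1 := by omega
      rw [e0, Nat.choose_succ_succ, e1, e2]
    have hch' : (((m+(j+1)+1).choose (j+1) : ℝ)) * (j+1).factorial * (m+1).factorial
        = (m+(j+1)+1).factorial := by exact_mod_cast hch
    have hpascal' : (((m+(j+1)+1).choose (j+1) : ℕ) : ℝ)
        = ((m+1+j).choose j : ℝ) + ((m+(j+1)).choose (j+1) : ℝ) := by exact_mod_cast hpascal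
    rw [harr, ← add_div, one_div_mul_one_div,
      div_eq_div_iff (by positivity) (by positivity), one_mul]
    rw [hpascal'] at hch'
    linear_combination hch' 
  calc Rser (j+1) + Rser j
      = (∑' m : ℕ, (((m+(j+1)).choose (j+1) : ℝ) / (m+(j+1)+1).factorial
          + ((m+1+j).choose j : ℝ) / (m+1+j+1).factorial)) + 1 / (j+1).factorial := by
        rw [hj, Rser, Summable.tsum_add (R_summable (j+1)) hshift]; ring
    _ = (1 / (j+1).factorial) * (∑' m : ℕ, (1:ℝ)/(m+1).factorial) + 1/(j+1).factorial := by
        rw [← tsum_mul_left]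
        congr 1
        exact tsum_congr key
    _ = Real.exp 1 / (j+1).factorial := by
        rw [tail_exp]; field_simp; ring


open Finset in
lemma tsum_prod_antidiagonal {H : ℕ × ℕ → ℝ} (hH : Summable H) :
    ∑' p : ℕ × ℕ, H p = ∑' n : ℕ, ∑ kl ∈ Finset.HasAntidiagonal.antidiagonal n, H kl := by
  conv_rhs => congr; ext; rw [← Finset.sum_finset_coe, ← tsum_fintype (L := .unconditional _)]
  rw [← Finset.HasAntidiagonal.sigmaAntidiagonalEquivProd.tsum_eq H]
  exact Summable.tsum_sigma' (fun n => (hasSum_fintype _).summable)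
    (Finset.HasAntidiagonal.sigmaAntidiagonalEquivProd.summable_iff.mpr hH)

lemma hockey_s7 (j : ℕ) : ∀ n : ℕ, ∑ b ∈ Finset.range (n+1), (b+j).choose j
    = (n+j+1).choose (j+1) := by
  intro n
  induction n with
  | zero => simp
  | succ n ih =>
      rw [Finset.sum_range_succ, ih]
      have h1 : n+1+j+1 = (n+j+1)+1 := by omega
      have h2 : n+1+j = n+j+1 := by omega
      rw [h1, h2]
      conv_rhs => rw [Nat.choose_succ_succ]
      simp only [Nat.succ_eq_add_one]
      omega

lemma summable_one_div_fact' : Summable (fun m : ℕ => (1:ℝ) / m.factorial) := by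
  simpa using Real.summable_pow_div_factorial 1

noncomputable def A (j s : ℕ) : ℝ := ∑' t : ℕ, ((t+j).choose j : ℝ) / (s+t+j+1).factorial

lemma fact_ineq (j s t : ℕ) :
    (t+j).choose j * (s.factorial * t.factorial) ≤ (s+t+j+1).factorial := by
  have h1 : (t+j).choose j * j.factorial * t.factorial = (t+j).factorial := by
    have := Nat.choose_mul_factorial_mul_factorial (Nat.le_add_left j t)
    simpa [Nat.add_sub_cancel] using this
  have h2 : (t+j).choose j * t.factorial ≤ (t+j).factorial := by
    have hj := Nat.one_le_iff_ne_zero.mpr (Nat.factorial_ne_zero j)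
    nlinarith [Nat.factorial_pos t]
  have h3 : (t+j).factorial * s.factorial ≤ (t+j+s).factorial :=
    Nat.le_of_dvd (Nat.factorial_pos _) (Nat.factorial_mul_factorial_dvd_factorial_add _ _)
  calc (t+j).choose j * (s.factorial * t.factorial)
      = ((t+j).choose j * t.factorial) * s.factorial := by ring
    _ ≤ (t+j).factorial * s.factorial := Nat.mul_le_mul_right _ h2
    _ ≤ (t+j+s).factorial := h3
    _ ≤ (s+t+j+1).factorial := Nat.factorial_le (by omega)

lemma term_le' (j s t : ℕ) :
    ((t+j).choose j : ℝ)/(s+t+j+1).factorial ≤ (1/s.factorial)*(1/t.factorial) := by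
  rw [one_div_mul_one_div, div_le_div_iff₀ (by positivity) (by positivity), one_mul]
  exact_mod_cast fact_ineq j s t

lemma A_term_summable (j s : ℕ) :
    Summable (fun t : ℕ => ((t+j).choose j : ℝ)/(s+t+j+1).factorial) :=
  Summable.of_nonneg_of_le (fun t => by positivity) (fun t => term_le' j s t)
    (summable_one_div_fact'.mul_left _)

lemma A_nonneg (j s : ℕ) : 0 ≤ A j s :=
  tsum_nonneg fun t => by positivity

lemma A_le (j s : ℕ) : A j s ≤ (∑' t : ℕ, (1:ℝ)/t.factorial) / s.factorial := by
  have : A j s ≤ ∑' t : ℕ, (1/(s.factorial:ℝ))*(1/t.factorial) :=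
    Summable.tsum_le_tsum (fun t => term_le' j s t) (A_term_summable j s)
      (summable_one_div_fact'.mul_left _)
  rw [tsum_mul_left] at this
  calc A j s ≤ _ := this
    _ = (∑' t : ℕ, (1:ℝ)/t.factorial) / s.factorial := by ring

lemma summable_shift (s : ℕ) :
    Summable (fun a : ℕ => (∑' t : ℕ, (1:ℝ)/t.factorial) / (s+a).factorial) := by
  have h : Summable (fun a : ℕ => (1:ℝ)/(s+a).factorial) :=
    summable_one_div_fact'.comp_injective (add_right_injective s)
  exact (h.mul_left _).congr fun a => by rw [mul_one_div]

lemma A_shift_summable (j s : ℕ) : Summable (fun m : ℕ+ => A j (s + (m:ℕ))) := by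
  have h : Summable (fun m : ℕ+ => (∑' t : ℕ, (1:ℝ)/t.factorial) / (s+(m:ℕ)).factorial) :=
    (summable_shift s).comp_injective (fun a b hab => PNat.coe_injective hab)
  exact Summable.of_nonneg_of_le (fun m => A_nonneg _ _) (fun m => A_le j _) h

lemma A_shift_summable' (j s : ℕ) : Summable (fun a : ℕ => A j (s+a+1)) := by
  refine Summable.of_nonneg_of_le (fun a => A_nonneg _ _) (fun a => ?_) (summable_shift (s+1))
  simpa [show ∀ a, s+1+a = s+a+1 from fun a => by omega] using A_le j (s+a+1)

lemma H_fib_summable (j s : ℕ) (a : ℕ) :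
    Summable (fun t : ℕ => ((t+j).choose j : ℝ)/(s+a+t+j+2).factorial) :=
  (A_term_summable j (s+a+1)).congr fun t => by rw [show s+a+1+t+j+1 = s+a+t+j+2 by omega]

lemma H_summable (j s : ℕ) :
    Summable (fun p : ℕ×ℕ => ((p.2+j).choose j : ℝ)/(s+p.1+p.2+j+2).factorial) := by
  apply (summable_prod_of_nonneg (fun p => by positivity)).mpr
  refine ⟨fun a => H_fib_summable j s a, ?_⟩
  refine (A_shift_summable' j s).congr fun a => ?_
  rw [A]
  exact tsum_congr fun t => by rw [show s+a+1+t+j+1 = s+a+t+j+2 by omega]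

lemma double_sum (j s : ℕ) : ∑' a : ℕ, A j (s+a+1) = A (j+1) s := by
  have hH := H_summable j s
  calc ∑' a : ℕ, A j (s+a+1)
      = ∑' (a : ℕ) (t : ℕ), ((t+j).choose j : ℝ)/(s+a+t+j+2).factorial := by
        refine tsum_congr fun a => ?_
        rw [A]
        exact tsum_congr fun t => by rw [show s+a+1+t+j+1 = s+a+t+j+2 by omega]
    _ = ∑' p : ℕ×ℕ, ((p.2+j).choose j : ℝ)/(s+p.1+p.2+j+2).factorial :=
        (Summable.tsum_prod' hH (H_fib_summable j s)).symm
    _ = ∑' n : ℕ, ∑ kl ∈ Finset.HasAntidiagonal.antidiagonal n,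
          ((kl.2+j).choose j : ℝ)/(s+kl.1+kl.2+j+2).factorial :=
        tsum_prod_antidiagonal hH
    _ = A (j+1) s := by
        rw [A]
        refine tsum_congr fun n => ?_
        rw [Finset.Nat.sum_antidiagonal_eq_sum_range_succ
          (fun a b => ((b+j).choose j : ℝ)/(s+a+b+j+2).factorial)]
        have e1 : ∀ i ∈ Finset.range (n+1),
            ((n-i+j).choose j : ℝ)/(s+i+(n-i)+j+2).factorial
            = ((n-i+j).choose j : ℝ)/(s+n+j+2).factorial := by
          intro i hi
          rw [Finset.mem_range] at hi
          rw [show s+i+(n-i)+j+2 = s+n+j+2 by omega]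
        rw [Finset.sum_congr rfl e1, ← Finset.sum_div, ← Nat.cast_sum]
        have e2 : ∑ i ∈ Finset.range (n+1), (n-i+j).choose j
            = ∑ i ∈ Finset.range (n+1), (i+j).choose j := by
          have := Finset.sum_range_reflect (fun b => (b+j).choose j) (n+1)
          refine Eq.trans ?_ this
          exact Finset.sum_congr rfl fun i hi => by
            rw [Finset.mem_range] at hi
            rw [show n+1-1-i = n-i by omega]
        rw [e2, hockey_s7 j n, show n+(j+1) = n+j+1 from rfl,
          show s+n+(j+1)+1 = s+n+j+2 by omega]

lemma main_comb (j : ℕ) : ∀ s : ℕ,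
    Summable (fun n : Fin (j+1) → ℕ+ => (1:ℝ)/(s + ∑ i, (n i : ℕ)).factorial)
    ∧ ∑' n : Fin (j+1) → ℕ+, (1:ℝ)/(s + ∑ i, (n i : ℕ)).factorial = A j s := by
  induction j with
  | zero =>
      intro s
      set f : (Fin 1 → ℕ+) → ℝ := fun n => (1:ℝ)/(s + ∑ i, (n i : ℕ)).factorial with hf
      let e : ℕ ≃ (Fin 1 → ℕ+) :=
        Equiv.pnatEquivNat.symm.trans (Equiv.funUnique (Fin 1) ℕ+).symm
      have hcomp : ∀ a : ℕ, f (e a) = (1:ℝ)/(s+a+1).factorial := by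
        intro a
        simp only [hf, e, Equiv.trans_apply, Equiv.funUnique, Equiv.pnatEquivNat,
          Equiv.coe_fn_symm_mk, Equiv.coe_fn_mk, Fin.sum_univ_one]
        norm_num [Nat.succPNat]
        exact congrArg Nat.factorial (show s + (a + 1) = s + a + 1 by omega)
      have hsum1 : Summable (fun a : ℕ => (1:ℝ)/(s+a+1).factorial) := by
        refine (summable_one_div_fact'.comp_injective (add_right_injective (s+1))).congr
          fun a => ?_
        simp only [Function.comp_apply]
        rw [show s+1+a = s+a+1 by omega]
      have hsumf : Summable f := e.summable_iff.mp (hsum1.congr fun a => (hcomp a).symm)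
      refine ⟨hsumf, ?_⟩
      rw [← e.tsum_eq f, tsum_congr hcomp, A]
      exact tsum_congr fun t => by norm_num
  | succ j ih =>
      intro s
      set f : (Fin (j+2) → ℕ+) → ℝ := fun n => (1:ℝ)/(s + ∑ i, (n i : ℕ)).factorial with hf
      let e : (ℕ+ × (Fin (j+1) → ℕ+)) ≃ (Fin (j+2) → ℕ+) := Fin.consEquiv (fun _ => ℕ+)
      set F : ℕ+ × (Fin (j+1) → ℕ+) → ℝ :=
        fun p => (1:ℝ)/((s+(p.1:ℕ)) + ∑ i, (p.2 i : ℕ)).factorial with hF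
      have hcomp : ∀ p, f (e p) = F p := by
        rintro ⟨m, n⟩
        have hcons : (∑ i, ((Fin.cons m n : ∀ _ : Fin (j+2), ℕ+) i : ℕ))
            = (m:ℕ) + ∑ i, (n i : ℕ) := by
          rw [Fin.sum_univ_succ]
          simp
        simp only [hf, hF, e, Fin.consEquiv_apply, hcons]
        rw [← Nat.add_assoc]
      have hfib : ∀ m : ℕ+, Summable fun n => F (m, n) := fun m => (ih (s+(m:ℕ))).1
      have houter : (fun m : ℕ+ => ∑' n, F (m, n)) = fun m : ℕ+ => A j (s+(m:ℕ)) :=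
        funext fun m => (ih (s+(m:ℕ))).2
      have hFsum : Summable F := by
        apply (summable_prod_of_nonneg (fun p => by positivity)).mpr
        exact ⟨hfib, houter ▸ A_shift_summable j s⟩
      have hsumf : Summable f := e.summable_iff.mp (hFsum.congr fun p => (hcomp p).symm)
      refine ⟨hsumf, ?_⟩
      calc ∑' n, f n = ∑' p, F p := by
            rw [← e.tsum_eq f]; exact tsum_congr hcomp
        _ = ∑' (m : ℕ+), ∑' n, F (m, n) := Summable.tsum_prod' hFsum hfib
        _ = ∑' (m : ℕ+), A j (s+(m:ℕ)) := by rw [houter]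
        _ = ∑' a : ℕ, A j (s+a+1) := by
            rw [← Equiv.pnatEquivNat.symm.tsum_eq (fun m : ℕ+ => A j (s+(m:ℕ)))]
            refine tsum_congr fun a => ?_
            congr 1
        _ = A (j+1) s := double_sum j s


lemma A_zero_eq_Rser (j : ℕ) : A j 0 = Rser j :=
  tsum_congr fun t => by rw [show 0+t+j+1 = t+j+1 by omega]

lemma Rser_eq_G (j : ℕ) : Rser j = G j 1 / j.factorial := by
  induction j with
  | zero => rw [Rser_zero]; simp [G]
  | succ j ih =>
      have hrec := Rser_rec j
      have hG : G (j+1) 1 = Real.exp 1 - ((j:ℝ)+1) * G j 1 := by simp [G]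
      have hfact : (((j+1).factorial : ℕ) : ℝ) = ((j:ℝ)+1) * (j.factorial : ℝ) := by
        push_cast [Nat.factorial_succ]; ring
      have hjf : ((j.factorial : ℕ) : ℝ) ≠ 0 := by positivity
      rw [ih] at hrec
      have hX : Rser (j+1) = Real.exp 1 / (((j:ℝ)+1) * j.factorial) - G j 1 / j.factorial := by
        rw [← hfact]
        linarith [hrec]
      rw [hG, hfact, hX]
      field_simp

theorem stmt_7 (k : ℕ) (hk : 1 ≤ k) :
    ∑' n : Fin k → ℕ+, (1 : ℝ) / (Nat.factorial (∑ i, (n i : ℕ)))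
      = (1 / (Nat.factorial (k - 1))) * iteratedDeriv (k - 1) expm1Div 1 := by
  obtain ⟨j, rfl⟩ : ∃ j, k = j + 1 := ⟨k - 1, by omega⟩
  simp only [Nat.add_sub_cancel]
  have hL : ∑' n : Fin (j+1) → ℕ+, (1:ℝ)/(∑ i, (n i : ℕ)).factorial = A j 0 := by
    rw [← (main_comb j 0).2]
    exact tsum_congr fun n => by rw [zero_add]
  rw [hL, A_zero_eq_Rser, Rser_eq_G, iteratedDeriv_expm1Div j 1 one_ne_zero]
  ring
end

section
/- For integers 1 ≤ j ≤ k, the series S_{k,j} := ∑_{n₁=1}^∞ ⋯ ∑_{n_k=1}^∞ (n₁⋯n_j)/(n₁+⋯+n_k)! equals (1/(k+j-1)!) times the (k+j-1)-st derivative of z ↦ z^{j-1} e^z evaluated at z = 1. -/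
open Finset
open scoped Nat

lemma R1 (s N : ℕ) : ∑ i ∈ range (N+1), (i+s).choose s = (N+s+1).choose (s+1) := by
  induction N with
  | zero => simp
  | succ N ih =>
    rw [Finset.sum_range_succ, ih, show N+1+s = N+s+1 by ring, Nat.choose_succ_succ' (N+s+1) s]
    omega

lemma R2 (s N : ℕ) : ∑ i ∈ range (N+1), (N-i+1) * ((i+s).choose s) = (N+s+2).choose (s+2) := by
  induction N with
  | zero => simp
  | succ N ih =>
    have split : ∑ i ∈ range (N+2), (N+1-i+1) * ((i+s).choose s)
        = (∑ i ∈ range (N+1), (N-i+1) * ((i+s).choose s)) + ∑ i ∈ range (N+2), (i+s).choose s := by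
      rw [Finset.sum_range_succ (n := N+1), Finset.sum_range_succ (f := fun i => (i+s).choose s) (n := N+1),
        ← add_assoc, ← Finset.sum_add_distrib]
      have h1 : ∀ i ∈ range (N+1), (N+1-i+1) * ((i+s).choose s)
          = (N-i+1) * ((i+s).choose s) + (i+s).choose s := by
        intro i hi
        rw [Finset.mem_range] at hi
        have : N+1-i+1 = (N-i+1) + 1 := by omega
        rw [this, add_mul, one_mul]
      rw [Finset.sum_congr rfl h1]
      have : N + 1 - (N+1) + 1 = 1 := by omega
      rw [this, one_mul]
    rw [split, ih, R1 s (N+1)]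
    rw [show N+1+s+1 = N+s+2 by ring, show N+1+s+2 = N+s+2+1 by ring, Nat.choose_succ_succ' (N+s+2) (s+1), show s+1+1 = s+2 from rfl]
    omega

lemma key1 (s N : ℕ) : ∑ p ∈ Finset.HasAntidiagonal.antidiagonal N, ((p.2+s).choose s) = (N+s+1).choose (s+1) := by
  rw [Finset.Nat.sum_antidiagonal_eq_sum_range_succ_mk]
  rw [← Finset.sum_range_reflect]
  rw [← R1 s N]
  apply Finset.sum_congr rfl
  intro i hi
  rw [Finset.mem_range] at hi
  congr 2
  omega

lemma key2 (s N : ℕ) : ∑ p ∈ Finset.HasAntidiagonal.antidiagonal N, (p.1+1) * ((p.2+s).choose s) = (N+s+2).choose (s+2) := by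
  rw [Finset.Nat.sum_antidiagonal_eq_sum_range_succ_mk]
  rw [← Finset.sum_range_reflect]
  rw [← R2 s N]
  apply Finset.sum_congr rfl
  intro i hi
  rw [Finset.mem_range] at hi
  have h1 : N + 1 - 1 - i = N - i := by omega
  have h2 : N - (N - i) = i := by omega
  rw [h1, h2]

open scoped ENNReal

lemma pair_tsum (F : ℕ × ℕ → ℝ≥0∞) :
    ∑' p : ℕ × ℕ, F p = ∑' N : ℕ, ∑ p ∈ Finset.HasAntidiagonal.antidiagonal N, F p := by
  rw [← (Equiv.sigmaFiberEquiv (fun p : ℕ × ℕ => p.1 + p.2)).tsum_eq, ENNReal.tsum_sigma']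
  congr 1
  funext N
  rw [← Finset.tsum_subtype (Finset.HasAntidiagonal.antidiagonal N) F]
  exact (Equiv.subtypeEquivRight (fun p => (Finset.HasAntidiagonal.mem_antidiagonal (n := N) (a := p)).symm)).tsum_eq
    (fun q => F q.1)

lemma count_tsum : ∀ k : ℕ, 1 ≤ k → ∀ j : ℕ, j ≤ k → ∀ g : ℕ → ℝ≥0∞,
    ∑' m : Fin k → ℕ, (∏ i : Fin k, if (i : ℕ) < j then (m i : ℝ≥0∞) + 1 else 1) * g (∑ i, m i)
      = ∑' N : ℕ, ((N + k + j - 1).choose (k + j - 1) : ℝ≥0∞) * g N := by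
  intro k
  induction k with
  | zero => intro h; omega
  | succ k ih =>
    intro _ j hj g
    rw [← (Fin.consEquiv (fun _ : Fin (k+1) => ℕ)).tsum_eq, ENNReal.tsum_prod']
    simp only [Fin.consEquiv_apply, Fin.prod_univ_succ, Fin.sum_univ_succ, Fin.cons_zero,
      Fin.cons_succ, Fin.val_zero, Fin.val_succ]
    rcases Nat.eq_zero_or_pos k with rfl | hk
    · -- base case k + 1 = 1
      interval_cases j
      · simp only [Nat.lt_irrefl, if_false, Nat.not_lt_zero, one_mul]
        simp only [Finset.univ_eq_empty, Finset.prod_empty, Finset.sum_empty, one_mul, add_zero,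
          Nat.add_zero, Nat.add_sub_cancel, Nat.choose_self, Nat.cast_one]
        simp only [Nat.choose_zero_right, Nat.cast_one, one_mul]
        exact tsum_congr fun a => (hasSum_unique (fun _ : Fin 0 → ℕ => g a)).tsum_eq
      · simp only [Nat.lt_irrefl, Nat.zero_lt_one, if_true]
        simp only [Finset.univ_eq_empty, Finset.prod_empty, Finset.sum_empty, mul_one, add_zero,
          Nat.add_zero, Nat.choose_one_right]
        refine tsum_congr fun a => ?_
        rw [Nat.choose_one_right]
        push_cast
        exact (hasSum_unique (fun _ : Fin 0 → ℕ => ((a:ℝ≥0∞) + 1) * g a)).tsum_eq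
    · rcases j with _ | j'
      · -- j = 0
        have h := fun a : ℕ => ih hk 0 (Nat.zero_le _) (fun N => g (a + N))
        simp only [Nat.not_lt_zero, if_false, Finset.prod_const_one, one_mul, Nat.add_zero] at h ⊢
        rw [tsum_congr h, ← ENNReal.tsum_prod, pair_tsum]
        apply tsum_congr
        intro N
        have hcong : ∀ p ∈ Finset.HasAntidiagonal.antidiagonal N,
            (((p.2 + k - 1).choose (k - 1) : ℕ) : ℝ≥0∞) * g (p.1 + p.2)
              = (((p.2 + k - 1).choose (k - 1) : ℕ) : ℝ≥0∞) * g N := by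
          intro p hp
          rw [Finset.HasAntidiagonal.mem_antidiagonal] at hp
          rw [hp]
        rw [Finset.sum_congr rfl hcong, ← Finset.sum_mul]
        congr 1
        have hs : ∀ b : ℕ, b + k - 1 = b + (k - 1) := fun b => by omega
        calc ∑ p ∈ Finset.HasAntidiagonal.antidiagonal N, (((p.2 + k - 1).choose (k - 1) : ℕ) : ℝ≥0∞)
            = (((∑ p ∈ Finset.HasAntidiagonal.antidiagonal N, (p.2 + (k-1)).choose (k - 1)) : ℕ) : ℝ≥0∞) := by
              rw [Nat.cast_sum]
              exact Finset.sum_congr rfl fun p _ => by rw [hs]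
          _ = ((N + (k+1) - 1).choose (k + 1 - 1) : ℝ≥0∞) := by
              rw [key1 (k-1) N, show N + (k-1) + 1 = N + (k+1) - 1 by omega,
                show (k-1) + 1 = k + 1 - 1 by omega]
      · -- j = j' + 1
        have hwt : ∀ (a : ℕ) (t : Fin k → ℕ),
            ((if 0 < j' + 1 then (a : ℝ≥0∞) + 1 else 1) *
              ∏ i : Fin k, if (i : ℕ) + 1 < j' + 1 then (t i : ℝ≥0∞) + 1 else 1)
              * g (a + ∑ i, t i)
            = ((a : ℝ≥0∞) + 1) * ((∏ i : Fin k, if (i : ℕ) < j' then (t i : ℝ≥0∞) + 1 else 1)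
                * g (a + ∑ i, t i)) := by
          intro a t
          simp only [Nat.zero_lt_succ, if_true, Nat.add_lt_add_iff_right, mul_assoc]
        calc ∑' (a : ℕ) (t : Fin k → ℕ),
              ((if 0 < j' + 1 then (a : ℝ≥0∞) + 1 else 1) *
                ∏ i : Fin k, if (i : ℕ) + 1 < j' + 1 then (t i : ℝ≥0∞) + 1 else 1)
                * g (a + ∑ i, t i)
            = ∑' (a : ℕ), ((a : ℝ≥0∞) + 1) *
                ∑' t : Fin k → ℕ, (∏ i : Fin k, if (i : ℕ) < j' then (t i : ℝ≥0∞) + 1 else 1)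
                  * g (a + ∑ i, t i) := by
              apply tsum_congr; intro a
              rw [tsum_congr (hwt a), ENNReal.tsum_mul_left]
          _ = ∑' (a : ℕ) (b : ℕ), ((a : ℝ≥0∞) + 1) *
                (((b + k + j' - 1).choose (k + j' - 1) : ℝ≥0∞) * g (a + b)) := by
              apply tsum_congr; intro a
              rw [ih hk j' (by omega) (fun N => g (a + N)), ENNReal.tsum_mul_left]
          _ = ∑' N : ℕ, ((N + (k+1) + (j'+1) - 1).choose ((k+1) + (j'+1) - 1) : ℝ≥0∞) * g N := by
              rw [← ENNReal.tsum_prod, pair_tsum]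
              apply tsum_congr
              intro N
              have hcong : ∀ p ∈ Finset.HasAntidiagonal.antidiagonal N,
                  ((p.1 : ℝ≥0∞) + 1) * ((((p.2 + k + j' - 1).choose (k + j' - 1) : ℕ) : ℝ≥0∞) * g (p.1 + p.2))
                    = (((p.1 : ℝ≥0∞) + 1) * (((p.2 + k + j' - 1).choose (k + j' - 1) : ℕ) : ℝ≥0∞)) * g N := by
                intro p hp
                rw [Finset.HasAntidiagonal.mem_antidiagonal] at hp
                rw [hp, mul_assoc]
              rw [Finset.sum_congr rfl hcong, ← Finset.sum_mul]
              congr 1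
              calc ∑ p ∈ Finset.HasAntidiagonal.antidiagonal N,
                    ((p.1 : ℝ≥0∞) + 1) * (((p.2 + k + j' - 1).choose (k + j' - 1) : ℕ) : ℝ≥0∞)
                  = (((∑ p ∈ Finset.HasAntidiagonal.antidiagonal N,
                      (p.1 + 1) * ((p.2 + (k + j' - 1)).choose (k + j' - 1))) : ℕ) : ℝ≥0∞) := by
                    rw [Nat.cast_sum]
                    apply Finset.sum_congr rfl
                    intro p _
                    rw [show p.2 + k + j' - 1 = p.2 + (k + j' - 1) by omega]
                    push_cast
                    ring
                _ = ((N + (k+1) + (j'+1) - 1).choose ((k+1) + (j'+1) - 1) : ℝ≥0∞) := by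
                    rw [key2 (k + j' - 1) N,
                      show N + (k + j' - 1) + 2 = N + (k+1) + (j'+1) - 1 by omega,
                      show (k + j' - 1) + 2 = (k+1) + (j'+1) - 1 by omega]

lemma iter_deriv (a : ℕ) : ∀ n : ℕ, iteratedDeriv n (fun z : ℝ => z ^ a * Real.exp z)
    = fun z => ∑ i ∈ range (n+1),
        (n.choose i : ℝ) * (a.descFactorial i : ℝ) * z ^ (a - i) * Real.exp z := by
  intro n
  induction n with
  | zero => funext z; simp
  | succ n ih =>
    rw [iteratedDeriv_succ, ih]
    funext x
    set T : ℕ → ℝ := fun i => (a.descFactorial i : ℝ) * x ^ (a - i) * Real.exp x with hT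
    have hd : ∀ i : ℕ, HasDerivAt
        (fun z : ℝ => (n.choose i : ℝ) * (a.descFactorial i : ℝ) * z ^ (a - i) * Real.exp z)
        ((n.choose i : ℝ) * (T (i+1) + T i)) x := by
      intro i
      have h1 : HasDerivAt (fun z : ℝ => ((n.choose i : ℝ) * (a.descFactorial i : ℝ)) * z ^ (a - i))
          (((n.choose i : ℝ) * (a.descFactorial i : ℝ)) * (((a - i : ℕ) : ℝ) * x ^ (a - i - 1))) x :=
        (hasDerivAt_pow (a - i) x).const_mul _
      have h2 := h1.mul (Real.hasDerivAt_exp x)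
      have heq : ((n.choose i : ℝ) * (a.descFactorial i : ℝ)) * (((a - i : ℕ) : ℝ) * x ^ (a - i - 1)) * Real.exp x
          + ((n.choose i : ℝ) * (a.descFactorial i : ℝ)) * x ^ (a - i) * Real.exp x
          = (n.choose i : ℝ) * (T (i+1) + T i) := by
        rw [hT]
        simp only []
        have hdesc : (a.descFactorial (i+1) : ℝ) = ((a - i : ℕ) : ℝ) * (a.descFactorial i : ℝ) := by
          rw [Nat.descFactorial_succ]; push_cast; ring
        rw [hdesc, Nat.sub_sub]
        ring
      have := h2
      rw [heq] at this
      convert this using 2 <;> rfl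
    have hsum : HasDerivAt (fun z : ℝ => ∑ i ∈ range (n+1),
        (n.choose i : ℝ) * (a.descFactorial i : ℝ) * z ^ (a - i) * Real.exp z)
        (∑ i ∈ range (n+1), (n.choose i : ℝ) * (T (i+1) + T i)) x :=
      HasDerivAt.fun_sum (fun i _ => hd i)
    rw [hsum.deriv]
    -- now the combinatorial recombination
    have hTgoal : ∀ i, (((n+1).choose i : ℝ)) * (a.descFactorial i : ℝ) * x ^ (a - i) * Real.exp x
        = ((n+1).choose i : ℝ) * T i := by
      intro i; rw [hT]; ring
    rw [Finset.sum_congr rfl (fun i _ => hTgoal i)]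
    rw [Finset.sum_range_succ' (fun i => (((n+1).choose i : ℝ)) * T i) (n+1)]
    have expand : ∀ i ∈ range (n+1), (((n+1).choose (i+1) : ℝ)) * T (i+1)
        = (n.choose i : ℝ) * T (i+1) + (n.choose (i+1) : ℝ) * T (i+1) := by
      intro i _
      rw [Nat.choose_succ_succ]
      push_cast
      ring
    rw [Finset.sum_congr rfl expand, Finset.sum_add_distrib]
    have hB : ∑ i ∈ range (n+1), (n.choose i : ℝ) * T i
        = (∑ i ∈ range n, (n.choose (i+1) : ℝ) * T (i+1)) + (n.choose 0 : ℝ) * T 0 :=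
      Finset.sum_range_succ' (fun i => (n.choose i : ℝ) * T i) n
    have hC : ∑ i ∈ range (n+1), (n.choose (i+1) : ℝ) * T (i+1)
        = ∑ i ∈ range n, (n.choose (i+1) : ℝ) * T (i+1) := by
      rw [Finset.sum_range_succ, Nat.choose_succ_self]
      simp
    rw [Finset.sum_congr rfl (fun i _ => mul_add ((n.choose i : ℝ)) (T (i+1)) (T i)),
      Finset.sum_add_distrib, hB, hC]
    simp only [Nat.choose_zero_right, Nat.cast_one, one_mul]
    ring

lemma nat_inv_mul (p q : ℕ) (hp : p ≠ 0) :
    ((p * q : ℕ) : ℝ≥0∞)⁻¹ = ((p : ℕ) : ℝ≥0∞)⁻¹ * ((q : ℕ) : ℝ≥0∞)⁻¹ := by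
  push_cast
  rw [ENNReal.mul_inv (Or.inl (by exact_mod_cast hp)) (Or.inl (ENNReal.natCast_ne_top p))]

lemma nat_inv_resc (p q r : ℕ) (hp : p ≠ 0) (h : p * q = r) :
    ((q : ℕ) : ℝ≥0∞)⁻¹ = ((p : ℕ) : ℝ≥0∞) * ((r : ℕ) : ℝ≥0∞)⁻¹ := by
  rw [← h, nat_inv_mul p q hp, ← mul_assoc,
    ENNReal.mul_inv_cancel (by exact_mod_cast hp) (ENNReal.natCast_ne_top p), one_mul]

lemma L1 (r : ℕ) : ∑' N : ℕ, ((N.choose r : ℕ) : ℝ≥0∞) * ((N ! : ℕ) : ℝ≥0∞)⁻¹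
    = (∑' M : ℕ, ((M ! : ℕ) : ℝ≥0∞)⁻¹) * ((r ! : ℕ) : ℝ≥0∞)⁻¹ := by
  have hinj : Function.Injective (fun N : ℕ => N + r) := add_left_injective r
  have hsupp : Function.support (fun N : ℕ => ((N.choose r : ℕ) : ℝ≥0∞) * ((N ! : ℕ) : ℝ≥0∞)⁻¹)
      ⊆ Set.range (fun N : ℕ => N + r) := by
    intro N hN
    simp only [Function.mem_support] at hN
    have hrN : r ≤ N := by
      by_contra hlt
      rw [Nat.choose_eq_zero_of_lt (by omega)] at hN
      simp at hN
    exact ⟨N - r, by simp only []; omega⟩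
  rw [← hinj.tsum_eq hsupp]
  have hterm : ∀ M : ℕ, (((M + r).choose r : ℕ) : ℝ≥0∞) * (((M + r)! : ℕ) : ℝ≥0∞)⁻¹
      = ((r ! : ℕ) : ℝ≥0∞)⁻¹ * ((M ! : ℕ) : ℝ≥0∞)⁻¹ := by
    intro M
    have hfac : ((M + r).choose r) * (r ! * M !) = (M + r)! := by
      have := Nat.choose_mul_factorial_mul_factorial (Nat.le_add_left r M)
      rw [Nat.add_sub_cancel] at this
      rw [← this]; ring
    have hc0 : ((M + r).choose r) ≠ 0 := Nat.pos_iff_ne_zero.mp (Nat.choose_pos (Nat.le_add_left r M))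
    rw [← hfac, nat_inv_mul _ _ hc0, nat_inv_mul _ _ (by positivity), ← mul_assoc,
      ENNReal.mul_inv_cancel (by exact_mod_cast hc0) (ENNReal.natCast_ne_top _), one_mul]
  simp only [hterm]
  rw [ENNReal.tsum_mul_left, mul_comm]

lemma E_eq : (∑' M : ℕ, ((M ! : ℕ) : ℝ≥0∞)⁻¹) = ENNReal.ofReal (Real.exp 1) := by
  have hsum : Summable (fun M : ℕ => ((M ! : ℕ) : ℝ)⁻¹) :=
    (Real.summable_pow_div_factorial 1).congr (fun n => by simp [one_div])
  have hexp : Real.exp 1 = ∑' M : ℕ, ((M ! : ℕ) : ℝ)⁻¹ := by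
    rw [Real.exp_eq_exp_ℝ, NormedSpace.exp_eq_tsum_div]
    exact tsum_congr fun n => by simp [one_div]
  rw [hexp, ENNReal.ofReal_tsum_of_nonneg (fun M => by positivity) hsum]
  exact tsum_congr fun M => by
    rw [ENNReal.ofReal_inv_of_pos (by positivity), ENNReal.ofReal_natCast]

lemma I2 (a m : ℕ) : ∑ p ∈ Finset.HasAntidiagonal.antidiagonal m, a.choose p.2 * m.choose p.1 * (p.2)!
    = ∑ i ∈ range (m+1), m.choose i * a.descFactorial i := by
  rw [Finset.Nat.sum_antidiagonal_eq_sum_range_succ_mk, ← Finset.sum_range_reflect]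
  apply Finset.sum_congr rfl
  intro i hi
  rw [Finset.mem_range] at hi
  have h1 : m + 1 - 1 - i = m - i := by omega
  have h2 : m - (m - i) = i := by omega
  rw [h1, h2, Nat.choose_symm (by omega), Nat.descFactorial_eq_factorial_mul_choose]
  ring

theorem stmt_8 (k j : ℕ) (hj : 1 ≤ j) (hjk : j ≤ k) :
    ∑' n : Fin k → ℕ+,
        (∏ i ∈ Finset.univ.filter (fun i : Fin k => (i : ℕ) < j), (n i : ℝ)) /
          (Nat.factorial (∑ i, (n i : ℕ)))
      = (1 / (Nat.factorial (k + j - 1))) *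
          iteratedDeriv (k + j - 1) (fun z : ℝ => z ^ (j - 1) * Real.exp z) 1 := by
  classical
  have hk1 : 1 ≤ k := hj.trans hjk
  set F : (Fin k → ℕ+) → ℝ≥0∞ := fun n =>
    (∏ i ∈ Finset.univ.filter (fun i : Fin k => (i : ℕ) < j), ((n i : ℕ) : ℝ≥0∞)) /
      ((((∑ i, (n i : ℕ)))! : ℕ) : ℝ≥0∞) with hF
  set E : ℝ≥0∞ := ∑' M : ℕ, ((M ! : ℕ) : ℝ≥0∞)⁻¹ with hE
  set S : ℕ := ∑ i ∈ range (k + j - 1 + 1), (k + j - 1).choose i * (j-1).descFactorial i with hS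
  have hFval : ∑' n, F n = (S : ℝ≥0∞) * E * (((k + j - 1)! : ℕ) : ℝ≥0∞)⁻¹ := by
    have step1 : ∑' n, F n = ∑' mm : Fin k → ℕ,
        (∏ i : Fin k, if (i : ℕ) < j then ((mm i : ℕ) : ℝ≥0∞) + 1 else 1)
          * ((((∑ i, mm i) + k)! : ℕ) : ℝ≥0∞)⁻¹ := by
      rw [← ((Equiv.piCongrRight (fun _ : Fin k => Equiv.pnatEquivNat)).symm).tsum_eq F]
      apply tsum_congr
      intro mm
      have hcoord : ∀ i : Fin k,
          ((((Equiv.piCongrRight fun _ : Fin k => Equiv.pnatEquivNat).symm mm) i : ℕ)) = mm i + 1 := by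
        intro i
        simp [Equiv.piCongrRight, Equiv.pnatEquivNat, Nat.succPNat]
      rw [hF]
      simp only [hcoord]
      rw [Finset.prod_filter]
      have hsum2 : (∑ i : Fin k, (mm i + 1)) = (∑ i, mm i) + k := by
        rw [Finset.sum_add_distrib]
        simp
      rw [hsum2, div_eq_mul_inv]
      congr 1
      apply Finset.prod_congr rfl
      intro i _
      split
      · push_cast; ring
      · rfl
    rw [step1, count_tsum k hk1 j hjk (fun N => (((N + k)! : ℕ) : ℝ≥0∞)⁻¹)]
    have hreidx : ∑' N : ℕ, (((N + k + j - 1).choose (k + j - 1) : ℕ) : ℝ≥0∞) * (((N + k)! : ℕ) : ℝ≥0∞)⁻¹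
        = ∑' N : ℕ, (((N + j - 1).choose (k + j - 1) : ℕ) : ℝ≥0∞) * ((N ! : ℕ) : ℝ≥0∞)⁻¹ := by
      have hinj : Function.Injective (fun N : ℕ => N + k) := add_left_injective k
      have hsupp : Function.support
          (fun N : ℕ => (((N + j - 1).choose (k + j - 1) : ℕ) : ℝ≥0∞) * ((N ! : ℕ) : ℝ≥0∞)⁻¹)
          ⊆ Set.range (fun N : ℕ => N + k) := by
        intro N hN
        simp only [Function.mem_support] at hN
        have hge : ¬ (N + j - 1 < k + j - 1) := by
          intro hc
          rw [Nat.choose_eq_zero_of_lt hc] at hN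
          simp at hN
        refine ⟨N - k, ?_⟩
        simp only []
        omega
      exact (hinj.tsum_eq hsupp)
    rw [hreidx]
    have hvand : ∀ N : ℕ, (((N + j - 1).choose (k + j - 1) : ℕ) : ℝ≥0∞) * ((N ! : ℕ) : ℝ≥0∞)⁻¹
        = ∑ p ∈ Finset.HasAntidiagonal.antidiagonal (k + j - 1),
            (((j-1).choose p.2 : ℕ) : ℝ≥0∞) * (((N.choose p.1 : ℕ) : ℝ≥0∞) * ((N ! : ℕ) : ℝ≥0∞)⁻¹) := by
      intro N
      have h1 : N + j - 1 = N + (j - 1) := by omega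
      rw [h1, Nat.add_choose_eq, Nat.cast_sum, Finset.sum_mul]
      apply Finset.sum_congr rfl
      intro p _
      push_cast
      ring
    rw [tsum_congr hvand, Summable.tsum_finsetSum (fun p _ => ENNReal.summable)]
    have hterm : ∀ p ∈ Finset.HasAntidiagonal.antidiagonal (k + j - 1),
        ∑' N : ℕ, (((j-1).choose p.2 : ℕ) : ℝ≥0∞) * (((N.choose p.1 : ℕ) : ℝ≥0∞) * ((N ! : ℕ) : ℝ≥0∞)⁻¹)
          = (((j-1).choose p.2 * ((k + j - 1).choose p.1) * (p.2)! : ℕ) : ℝ≥0∞) * E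
              * (((k + j - 1)! : ℕ) : ℝ≥0∞)⁻¹ := by
      intro p hp
      rw [Finset.HasAntidiagonal.mem_antidiagonal] at hp
      have hle : p.1 ≤ k + j - 1 := by omega
      rw [ENNReal.tsum_mul_left, L1 p.1]
      have hfac : ((k + j - 1).choose p.1 * (p.2)!) * (p.1)! = (k + j - 1)! := by
        have h3 := Nat.choose_mul_factorial_mul_factorial hle
        have h2 : k + j - 1 - p.1 = p.2 := by omega
        rw [h2] at h3
        rw [← h3]; ring
      have hp0 : (k + j - 1).choose p.1 * (p.2)! ≠ 0 :=
        mul_ne_zero (Nat.pos_iff_ne_zero.mp (Nat.choose_pos hle)) (Nat.factorial_ne_zero _)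
      rw [nat_inv_resc _ _ _ hp0 hfac]
      push_cast
      ring
    rw [Finset.sum_congr rfl hterm, ← Finset.sum_mul, ← Finset.sum_mul, ← Nat.cast_sum,
      I2 (j-1) (k + j - 1), hS]
  -- transfer to ℝ
  have hFne : ∀ n : Fin k → ℕ+, F n ≠ ⊤ := by
    intro n
    rw [hF]
    apply ne_of_lt
    apply ENNReal.div_lt_top
    · exact (ENNReal.prod_lt_top (fun i _ => ENNReal.natCast_lt_top _)).ne
    · exact Nat.cast_ne_zero.mpr (Nat.factorial_ne_zero _)
  have hL : ∑' n : Fin k → ℕ+,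
      (∏ i ∈ Finset.univ.filter (fun i : Fin k => (i : ℕ) < j), (n i : ℝ)) /
        (Nat.factorial (∑ i, (n i : ℕ))) = (∑' n, F n).toReal := by
    rw [ENNReal.tsum_toReal_eq hFne]
    apply tsum_congr
    intro n
    rw [hF]
    rw [ENNReal.toReal_div, ENNReal.toReal_prod]
    push_cast
    rfl
  rw [hL, hFval, hE, E_eq, iter_deriv (j-1) (k + j - 1)]
  rw [ENNReal.toReal_mul, ENNReal.toReal_mul, ENNReal.toReal_inv, ENNReal.toReal_natCast,
    ENNReal.toReal_natCast, ENNReal.toReal_ofReal (Real.exp_pos 1).le]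
  have hRHS : (∑ i ∈ range (k + j - 1 + 1),
      ((k + j - 1).choose i : ℝ) * ((j-1).descFactorial i : ℝ) * (1:ℝ) ^ (j - 1 - i) * Real.exp 1)
      = (S : ℝ) * Real.exp 1 := by
    rw [hS]
    push_cast
    rw [Finset.sum_mul]
    apply Finset.sum_congr rfl
    intro i _
    rw [one_pow]
    ring
  beta_reduce
  rw [hRHS]
  have hfpos : (0:ℝ) < ((k + j - 1)! : ℝ) := by positivity
  field_simp
end

section
/- (Popoviciu) For pairwise distinct real numbers x₀, …, x_k and every nonnegative integer r, the divided difference of the monomial z ↦ z^{k+r} at the nodes x₀, …, x_k equals ∑ x₀^{n₀} ⋯ x_k^{n_k}, where the sum runs over all tuples of nonnegative integers (n₀, …, n_k) with n₀ + ⋯ + n_k = r. -/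
/-- Divided difference of `f` at the nodes `x 0, …, x (k-1)` (Lagrange form, which agrees
with the usual recursive definition when the nodes are pairwise distinct). -/
noncomputable def divDiff {k : ℕ} (x : Fin k → ℝ) (f : ℝ → ℝ) : ℝ :=
  ∑ i, f (x i) / ∏ j ∈ Finset.univ.erase i, (x i - x j)


open Finset


noncomputable def hsum (r : ℕ) {k : ℕ} (x : Fin k → ℝ) : ℝ :=
  ∑ n ∈ Finset.Nat.antidiagonalTuple k r, ∏ i, x i ^ n i

lemma hsum_perm {k : ℕ} (r : ℕ) (x : Fin k → ℝ) (e : Equiv.Perm (Fin k)) :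
    hsum r (x ∘ e) = hsum r x := by
  unfold hsum
  apply Finset.sum_nbij' (fun n => n ∘ e.symm) (fun n => n ∘ e)
  · intro n hn
    rw [Finset.Nat.mem_antidiagonalTuple] at hn ⊢
    rw [← hn]; exact Equiv.sum_comp e.symm n
  · intro n hn
    rw [Finset.Nat.mem_antidiagonalTuple] at hn ⊢
    rw [← hn]; exact Equiv.sum_comp e n
  · intro n _; ext i; simp
  · intro n _; ext i; simp
  · intro n _
    rw [← Equiv.prod_comp e (fun i => x i ^ (n ∘ e.symm) i)]
    simp

lemma hsum_cons {k : ℕ} (r : ℕ) (x0 : ℝ) (x : Fin k → ℝ) :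
    hsum r (Fin.cons x0 x) = ∑ ab ∈ Finset.HasAntidiagonal.antidiagonal r, x0 ^ ab.1 * hsum ab.2 x := by
  unfold hsum
  simp_rw [Finset.mul_sum]
  rw [← Finset.sum_sigma (Finset.HasAntidiagonal.antidiagonal r) (fun ab => Finset.Nat.antidiagonalTuple k ab.2)
    (fun p => x0 ^ p.1.1 * ∏ i, x i ^ p.2 i)]
  apply Finset.sum_nbij' (fun n => (⟨(n 0, ∑ i, n (Fin.succ i)), Fin.tail n⟩ :
      (_ : ℕ × ℕ) × (Fin k → ℕ))) (fun p => Fin.cons p.1.1 p.2)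
  · intro n hn
    simp only [Finset.Nat.mem_antidiagonalTuple, Finset.mem_sigma,
      Finset.HasAntidiagonal.mem_antidiagonal] at hn ⊢
    refine ⟨?_, rfl⟩
    rw [← hn, Fin.sum_univ_succ]
  · rintro ⟨⟨a, b⟩, m⟩ hp
    simp only [Finset.mem_sigma, Finset.HasAntidiagonal.mem_antidiagonal,
      Finset.Nat.mem_antidiagonalTuple] at hp ⊢
    rw [Fin.sum_cons, hp.2, hp.1]
  · intro n _
    simp [Fin.cons_self_tail]
  · rintro ⟨⟨a, b⟩, m⟩ hp
    simp only [Finset.mem_sigma, Finset.HasAntidiagonal.mem_antidiagonal,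
      Finset.Nat.mem_antidiagonalTuple] at hp
    simp [Fin.sum_cons, hp.2, Fin.tail_cons]
  · intro n _
    rw [Fin.prod_univ_succ]
    simp [Fin.tail]

lemma hsum_tail {k : ℕ} (r : ℕ) (y : Fin (k + 1) → ℝ) :
    hsum (r + 1) y = hsum (r + 1) (Fin.tail y) + y 0 * hsum r y := by
  conv_lhs => rw [← Fin.cons_self_tail y, hsum_cons]
  conv_rhs => rw [← Fin.cons_self_tail y, hsum_cons r (y 0) (Fin.tail y)]
  rw [Finset.Nat.antidiagonal_succ, Finset.sum_cons, Finset.sum_map, Finset.mul_sum]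
  simp only [pow_zero, one_mul, Function.Embedding.coe_prodMap, Prod.map_fst, Prod.map_snd,
    Function.Embedding.coeFn_mk, Function.Embedding.refl_apply, pow_succ, Fin.cons_zero]
  congr 1
  apply Finset.sum_congr rfl
  intro ab _
  ring

lemma cons_last_init {k : ℕ} (y : Fin (k + 2) → ℝ) :
    Fin.cons (y (Fin.last (k + 1))) (Fin.init y) = y ∘ (finRotate (k + 2)).symm := by
  ext i
  refine Fin.cases ?_ ?_ i
  · have h0 : (finRotate (k + 2)).symm 0 = Fin.last (k + 1) := by
      rw [Equiv.symm_apply_eq, finRotate_succ_apply, Fin.last_add_one]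
    simp [h0]
  · intro j
    have hj : (finRotate (k + 2)).symm j.succ = Fin.castSucc j := by
      rw [Equiv.symm_apply_eq, finRotate_succ_apply, Fin.coeSucc_eq_succ]
    simp [hj, Fin.init]

lemma hsum_init {k : ℕ} (r : ℕ) (y : Fin (k + 2) → ℝ) :
    hsum (r + 1) y = hsum (r + 1) (Fin.init y) + y (Fin.last (k + 1)) * hsum r y := by
  have hperm : ∀ s : ℕ, hsum s (Fin.cons (y (Fin.last (k + 1))) (Fin.init y)) = hsum s y := by
    intro s
    rw [cons_last_init]
    exact hsum_perm s y ((finRotate (k + 2)).symm)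
  have := hsum_tail r (Fin.cons (y (Fin.last (k + 1))) (Fin.init y))
  rw [hperm, hperm, Fin.tail_cons, Fin.cons_zero] at this
  exact this

lemma divDiff_tail {k : ℕ} (y : Fin (k + 2) → ℝ) (f : ℝ → ℝ) :
    divDiff (Fin.tail y) f
      = ∑ i ∈ Finset.univ.erase (0 : Fin (k + 2)),
          f (y i) / ∏ j ∈ (Finset.univ.erase i).erase 0, (y i - y j) := by
  unfold divDiff
  apply Finset.sum_bij (fun (i : Fin (k + 1)) (_ : i ∈ Finset.univ) => i.succ)
  · intro a _
    simp [Fin.succ_ne_zero]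
  · intro a _ b _ h
    exact Fin.succ_injective _ h
  · intro b hb
    simp only [Finset.mem_erase, Finset.mem_univ, and_true] at hb
    exact ⟨b.pred hb, Finset.mem_univ _, Fin.succ_pred b hb⟩
  · intro i _
    congr 1
    apply Finset.prod_bij (fun (j : Fin (k + 1)) (_ : j ∈ Finset.univ.erase i) => j.succ)
    · intro a ha
      simp only [Finset.mem_erase, Finset.mem_univ, and_true] at ha ⊢
      exact ⟨Fin.succ_ne_zero a, fun h => ha (Fin.succ_injective _ h)⟩
    · intro a _ b _ h
      exact Fin.succ_injective _ h
    · intro b hb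
      simp only [Finset.mem_erase, Finset.mem_univ, and_true] at hb
      obtain ⟨hb0, hbi⟩ := hb
      refine ⟨b.pred hb0, ?_, Fin.succ_pred b hb0⟩
      simp only [Finset.mem_erase, Finset.mem_univ, and_true]
      intro h
      exact hbi (by rw [← Fin.succ_pred b hb0, h])
    · intro j _
      rfl

lemma divDiff_init {k : ℕ} (y : Fin (k + 2) → ℝ) (f : ℝ → ℝ) :
    divDiff (Fin.init y) f
      = ∑ i ∈ Finset.univ.erase (Fin.last (k + 1)),
          f (y i) / ∏ j ∈ (Finset.univ.erase i).erase (Fin.last (k + 1)), (y i - y j) := by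
  unfold divDiff
  apply Finset.sum_bij (fun (i : Fin (k + 1)) (_ : i ∈ Finset.univ) => i.castSucc)
  · intro a _
    simp only [Finset.mem_erase, Finset.mem_univ, and_true]
    exact Fin.castSucc_lt_last a |>.ne
  · intro a _ b _ h
    exact Fin.castSucc_injective _ h
  · intro b hb
    simp only [Finset.mem_erase, Finset.mem_univ, and_true] at hb
    exact ⟨b.castPred hb, Finset.mem_univ _, Fin.castSucc_castPred b hb⟩
  · intro i _
    congr 1
    apply Finset.prod_bij (fun (j : Fin (k + 1)) (_ : j ∈ Finset.univ.erase i) => j.castSucc)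
    · intro a ha
      simp only [Finset.mem_erase, Finset.mem_univ, and_true] at ha ⊢
      exact ⟨(Fin.castSucc_lt_last a).ne, fun h => ha (Fin.castSucc_injective _ h)⟩
    · intro a _ b _ h
      exact Fin.castSucc_injective _ h
    · intro b hb
      simp only [Finset.mem_erase, Finset.mem_univ, and_true] at hb
      obtain ⟨hbl, hbi⟩ := hb
      refine ⟨b.castPred hbl, ?_, Fin.castSucc_castPred b hbl⟩
      simp only [Finset.mem_erase, Finset.mem_univ, and_true]
      intro h
      exact hbi (by rw [← Fin.castSucc_castPred b hbl, h])
    · intro j _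
      rfl

lemma divDiff_rec {k : ℕ} (y : Fin (k + 2) → ℝ) (hy : Function.Injective y) (f : ℝ → ℝ) :
    (y (Fin.last (k + 1)) - y 0) * divDiff y f
      = divDiff (Fin.tail y) f - divDiff (Fin.init y) f := by
  classical
  set l : Fin (k + 2) := Fin.last (k + 1) with hldef
  have h0l : (0 : Fin (k + 2)) ≠ l := by
    simp [hldef, Fin.ext_iff]
  have hsub : ∀ i j : Fin (k + 2), i ≠ j → y i - y j ≠ 0 :=
    fun i j h => sub_ne_zero.mpr (fun e => h (hy e))
  set M : Finset (Fin (k + 2)) := (Finset.univ.erase 0).erase l with hMdef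
  have hlM : Finset.univ.erase (0 : Fin (k + 2)) = insert l M := by
    rw [hMdef, Finset.insert_erase (by simp [h0l.symm])]
  have h0M : Finset.univ.erase l = insert (0 : Fin (k + 2)) M := by
    rw [hMdef, Finset.erase_right_comm, Finset.insert_erase (by simp [h0l])]
  have hU : (Finset.univ : Finset (Fin (k + 2))) = insert (0 : Fin (k + 2)) (insert l M) := by
    rw [← hlM, Finset.insert_erase (Finset.mem_univ 0)]
  have h0nM : (0 : Fin (k + 2)) ∉ M := fun h =>
    Finset.notMem_erase 0 Finset.univ (Finset.mem_of_mem_erase h)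
  have hlnM : l ∉ M := Finset.notMem_erase l _
  have h0nlM : (0 : Fin (k + 2)) ∉ insert l M := by
    simp [h0l, h0nM]
  have hMne : ∀ i ∈ M, i ≠ 0 ∧ i ≠ l := by
    intro i hi
    rw [hMdef, Finset.mem_erase, Finset.mem_erase] at hi
    exact ⟨hi.2.1, hi.1⟩
  have sumU : ∀ g : Fin (k + 2) → ℝ, ∑ i, g i = g 0 + (g l + ∑ i ∈ M, g i) := by
    intro g
    rw [hU, Finset.sum_insert h0nlM, Finset.sum_insert hlnM]
  have sumE0 : ∀ g : Fin (k + 2) → ℝ, ∑ i ∈ Finset.univ.erase 0, g i = g l + ∑ i ∈ M, g i := by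
    intro g
    rw [hlM, Finset.sum_insert hlnM]
  have sumEl : ∀ g : Fin (k + 2) → ℝ, ∑ i ∈ Finset.univ.erase l, g i = g 0 + ∑ i ∈ M, g i := by
    intro g
    rw [h0M, Finset.sum_insert h0nM]
  rw [divDiff_tail, divDiff_init]
  unfold divDiff
  rw [sumU _, sumE0 _, sumEl _, mul_add, mul_add]
  -- endpoint at 0
  have h0 : (y l - y 0) * (f (y 0) / ∏ j ∈ Finset.univ.erase 0, (y 0 - y j))
      = - (f (y 0) / ∏ j ∈ (Finset.univ.erase 0).erase l, (y 0 - y j)) := by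
    rw [← hMdef, hlM, Finset.prod_insert hlnM]
    have hP : ∏ j ∈ M, (y 0 - y j) ≠ 0 :=
      Finset.prod_ne_zero_iff.mpr (fun j hj => hsub 0 j (hMne j hj).1.symm)
    have h1 : y 0 - y l ≠ 0 := hsub 0 l h0l
    field_simp
    ring
  -- endpoint at l
  have hl : (y l - y 0) * (f (y l) / ∏ j ∈ Finset.univ.erase l, (y l - y j))
      = f (y l) / ∏ j ∈ (Finset.univ.erase l).erase 0, (y l - y j) := by
    have hset : (Finset.univ.erase l).erase (0 : Fin (k + 2)) = M := by
      rw [hMdef, Finset.erase_right_comm]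
    rw [hset, h0M, Finset.prod_insert h0nM]
    have hP : ∏ j ∈ M, (y l - y j) ≠ 0 :=
      Finset.prod_ne_zero_iff.mpr (fun j hj => hsub l j (hMne j hj).2.symm)
    have h1 : y l - y 0 ≠ 0 := hsub l 0 h0l.symm
    field_simp
  -- middle terms
  have hmid : ∑ i ∈ M, f (y i) / ∏ j ∈ (Finset.univ.erase i).erase 0, (y i - y j)
        - ∑ i ∈ M, f (y i) / ∏ j ∈ (Finset.univ.erase i).erase l, (y i - y j)
      = (y l - y 0) * ∑ i ∈ M, f (y i) / ∏ j ∈ Finset.univ.erase i, (y i - y j) := by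
    rw [← Finset.sum_sub_distrib, Finset.mul_sum]
    apply Finset.sum_congr rfl
    intro i hi
    obtain ⟨hi0, hil⟩ := hMne i hi
    have h0mem : (0 : Fin (k + 2)) ∈ Finset.univ.erase i := by simp [hi0.symm]
    have hlmem : l ∈ Finset.univ.erase i := by simp [hil.symm]
    have hD0 : ∏ j ∈ Finset.univ.erase i, (y i - y j)
        = (y i - y 0) * ∏ j ∈ (Finset.univ.erase i).erase 0, (y i - y j) :=
      (Finset.mul_prod_erase _ _ h0mem).symm
    have hDl : ∏ j ∈ Finset.univ.erase i, (y i - y j)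
        = (y i - y l) * ∏ j ∈ (Finset.univ.erase i).erase l, (y i - y j) :=
      (Finset.mul_prod_erase _ _ hlmem).symm
    have hi0' : y i - y 0 ≠ 0 := hsub i 0 hi0
    have hil' : y i - y l ≠ 0 := hsub i l hil
    have e1 : f (y i) / ∏ j ∈ (Finset.univ.erase i).erase 0, (y i - y j)
        = ((y i - y 0) * f (y i)) / ∏ j ∈ Finset.univ.erase i, (y i - y j) := by
      rw [hD0, mul_div_mul_left _ _ hi0']
    have e2 : f (y i) / ∏ j ∈ (Finset.univ.erase i).erase l, (y i - y j)
        = ((y i - y l) * f (y i)) / ∏ j ∈ Finset.univ.erase i, (y i - y j) := by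
      rw [hDl, mul_div_mul_left _ _ hil']
    rw [e1, e2, div_sub_div_same, mul_div_assoc']
    congr 1
    ring
  rw [← hldef]
  linarith [h0, hl, hmid]

theorem stmt_9 (k r : ℕ) (x : Fin (k + 1) → ℝ) (hx : Function.Injective x) :
    divDiff x (fun z => z ^ (k + r))
      = ∑ n ∈ Finset.Nat.antidiagonalTuple (k + 1) r, ∏ i, x i ^ n i := by
  induction k generalizing r with
  | zero =>
    have he : (Finset.univ.erase (0 : Fin 1)) = ∅ := by decide
    simp [divDiff, Finset.Nat.antidiagonalTuple_one, he, Fin.sum_univ_one, Fin.prod_univ_one]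
  | succ k ih =>
    have key := divDiff_rec x hx (fun z => z ^ (k + 1 + r))
    have hkr : k + 1 + r = k + (r + 1) := by omega
    have ht : divDiff (Fin.tail x) (fun z => z ^ (k + 1 + r)) = hsum (r + 1) (Fin.tail x) := by
      rw [hkr]
      exact ih (r + 1) _ (hx.comp (Fin.succ_injective _))
    have hi2 : divDiff (Fin.init x) (fun z => z ^ (k + 1 + r)) = hsum (r + 1) (Fin.init x) := by
      rw [hkr]
      exact ih (r + 1) _ (hx.comp (Fin.castSucc_injective _))
    have hne : x (Fin.last (k + 1)) - x 0 ≠ 0 := by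
      refine sub_ne_zero.mpr (fun e => ?_)
      have := hx e
      simp [Fin.ext_iff] at this
    have hh : hsum (r + 1) (Fin.tail x) - hsum (r + 1) (Fin.init x)
        = (x (Fin.last (k + 1)) - x 0) * hsum r x := by
      have a := hsum_tail r x
      have b := hsum_init r x
      linarith
    rw [ht, hi2] at key
    have h2 : (x (Fin.last (k + 1)) - x 0) * divDiff x (fun z => z ^ (k + 1 + r))
        = (x (Fin.last (k + 1)) - x 0) * hsum r x := by rw [key, hh]
    rw [mul_left_cancel₀ hne h2]
    rfl
end

section
/- Let g(z) = ∑_{n=0}^∞ g_n z^n converge for |z| < R with R > 1, let ℓ ≥ 0 be an integer, and set g_ℓ(z) = ∑_{n=0}^∞ g_{n+ℓ} z^n. Then for pairwise distinct real numbers x₁, …, x_k with |x_i| < R, the multiple series ∑_{n₁=0}^∞ ⋯ ∑_{n_k=0}^∞ g_{n₁+⋯+n_k+ℓ} · x₁^{n₁}⋯x_k^{n_k} equals the divided difference [x₁,…,x_k; z^{k-1} g_ℓ(z)]. -/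
open Finset Polynomial

lemma summable_prod_pow : ∀ (k : ℕ) (y : Fin k → ℝ), (∀ i, 0 ≤ y i) → (∀ i, y i < 1) →
    Summable (fun n : Fin k → ℕ => ∏ i, y i ^ n i) := by
  intro k
  induction k with
  | zero => intro y _ _; exact .of_finite
  | succ k ih =>
    intro y h0 h1
    rw [← (Fin.consEquiv fun _ => ℕ).summable_iff]
    have hf : Summable fun m : ℕ => ‖y 0 ^ m‖ := by
      simpa [abs_of_nonneg (h0 0), abs_of_nonneg (pow_nonneg (h0 0) _)] using
        summable_geometric_of_lt_one (h0 0) (h1 0)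
    have hg : Summable fun n : Fin k → ℕ => ‖∏ i, y i.succ ^ n i‖ := by
      have := ih (fun i => y i.succ) (fun i => h0 i.succ) (fun i => h1 i.succ)
      refine this.congr fun n => ?_
      rw [Real.norm_eq_abs, abs_of_nonneg (prod_nonneg fun i _ => pow_nonneg (h0 i.succ) _)]
    have := summable_mul_of_summable_norm hf hg
    refine this.congr fun p => ?_
    simp [Function.comp, Fin.prod_univ_succ]

lemma hasSum_prod_pow : ∀ (k : ℕ) (y : Fin k → ℝ), (∀ i, |y i| < 1) →
    HasSum (fun n : Fin k → ℕ => ∏ i, y i ^ n i) (∏ i, (1 - y i)⁻¹) := by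
  intro k
  induction k with
  | zero =>
    intro y _
    have h : (fun n : Fin 0 → ℕ => ∏ i, y i ^ n i) = fun _ => 1 := by
      funext n; simp
    rw [h]
    simpa using hasSum_single (f := fun _ : Fin 0 → ℕ => (1:ℝ)) default (fun b hb => by
      simp [Subsingleton.elim b default] at hb)
  | succ k ih =>
    intro y h1
    rw [← (Fin.consEquiv fun _ => ℕ).hasSum_iff]
    have hgeo : HasSum (fun m : ℕ => y 0 ^ m) (1 - y 0)⁻¹ :=
      hasSum_geometric_of_norm_lt_one (by simpa using h1 0)
    have hih := ih (fun i => y i.succ) (fun i => h1 i.succ)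
    have hf : Summable fun m : ℕ => ‖y 0 ^ m‖ := by
      simpa [abs_pow] using summable_geometric_of_lt_one (abs_nonneg (y 0))
        (h1 0)
    have hg : Summable fun n : Fin k → ℕ => ‖∏ i, y i.succ ^ n i‖ := by
      have hs := summable_prod_pow k (fun i => |y i.succ|) (fun i => abs_nonneg _)
        (fun i => h1 i.succ)
      refine hs.congr fun n => ?_
      simp [abs_prod, abs_pow]
    have h2 := summable_mul_of_summable_norm (f := fun m : ℕ => y 0 ^ m)
      (g := fun n : Fin k → ℕ => ∏ i, y i.succ ^ n i) hf hg
    have hmul := hgeo.mul hih h2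
    have heq : (fun n : Fin (k+1) → ℕ => ∏ i, y i ^ n i) ∘ (Fin.consEquiv fun _ => ℕ)
        = fun p : ℕ × (Fin k → ℕ) => y 0 ^ p.1 * ∏ i, y i.succ ^ p.2 i := by
      funext p
      simp [Function.comp, Fin.prod_univ_succ]
    rw [heq, Fin.prod_univ_succ]
    exact hmul


lemma key_poly {k : ℕ} (hk : 1 ≤ k) (x : Fin k → ℝ) (hx : Function.Injective x) (t : ℝ) :
    ∑ i, x i ^ (k - 1) / (∏ j ∈ univ.erase i, (x i - x j)) * ∏ j ∈ univ.erase i, (1 - x j * t)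
      = 1 := by
  have hcard : ∀ i : Fin k, #((univ : Finset (Fin k)).erase i) = k - 1 := by
    intro i; rw [card_erase_of_mem (mem_univ i), card_univ, Fintype.card_fin]
  have hlag : ∀ s : ℝ, ∑ i, x i ^ (k-1) / (∏ j ∈ univ.erase i, (x i - x j)) *
      ∏ j ∈ univ.erase i, (s - x j) = s ^ (k-1) := by
    intro s
    have hinj : Set.InjOn x ↑(univ : Finset (Fin k)) := Function.Injective.injOn hx
    have hdeg : (X ^ (k-1) : Polynomial ℝ).degree < #(univ : Finset (Fin k)) := by
      rw [degree_X_pow, card_univ, Fintype.card_fin]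
      exact_mod_cast Nat.sub_lt hk one_pos
    have h := Lagrange.eq_interpolate (v := x) hinj hdeg
    have h2 := congrArg (Polynomial.eval s) h
    rw [Lagrange.interpolate_apply, eval_finset_sum] at h2
    simp only [eval_pow, eval_X, eval_mul, eval_C] at h2
    rw [h2]
    refine Finset.sum_congr rfl fun i _ => ?_
    rw [Lagrange.basis, eval_prod]
    simp only [Lagrange.basisDivisor, eval_mul, eval_C, eval_sub, eval_X]
    rw [Finset.prod_mul_distrib, Finset.prod_inv_distrib, div_eq_mul_inv]
    ring
  set P : Polynomial ℝ :=
    ∑ i, C (x i ^ (k - 1) / ∏ j ∈ univ.erase i, (x i - x j)) *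
      ∏ j ∈ univ.erase i, (1 - C (x j) * X) with hP
  have hPeval : ∀ s : ℝ, P.eval s
      = ∑ i, x i ^ (k-1) / (∏ j ∈ univ.erase i, (x i - x j)) *
        ∏ j ∈ univ.erase i, (1 - x j * s) := by
    intro s
    rw [hP, eval_finset_sum]
    refine Finset.sum_congr rfl fun i _ => ?_
    rw [eval_mul, eval_C, eval_prod]
    simp
  have hPone : P = C 1 := by
    apply eq_of_infinite_eval_eq
    apply Set.Infinite.mono (s := {s : ℝ | s ≠ 0})
    · intro s hs
      have hs : (s : ℝ) ≠ 0 := hs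
      simp only [Set.mem_setOf_eq, eval_C, hPeval s]
      have hprod : ∀ i : Fin k, ∏ j ∈ univ.erase i, (1 - x j * s)
          = s ^ (k-1) * ∏ j ∈ univ.erase i, (s⁻¹ - x j) := by
        intro i
        rw [← hcard i, ← Finset.prod_const, ← Finset.prod_mul_distrib]
        refine Finset.prod_congr rfl fun j _ => ?_
        rw [mul_sub, mul_inv_cancel₀ hs]; ring
      simp only [hprod]
      calc ∑ i, (x i ^ (k-1) / ∏ j ∈ univ.erase i, (x i - x j)) *
            (s^(k-1) * ∏ j ∈ univ.erase i, (s⁻¹ - x j))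
          = s^(k-1) * ∑ i, (x i ^ (k-1) / ∏ j ∈ univ.erase i, (x i - x j)) *
            ∏ j ∈ univ.erase i, (s⁻¹ - x j) := by
            rw [Finset.mul_sum]; exact Finset.sum_congr rfl fun i _ => by ring
        _ = s^(k-1) * (s⁻¹)^(k-1) := by rw [hlag s⁻¹]
        _ = 1 := by rw [← mul_pow, mul_inv_cancel₀ hs, one_pow]
    · exact Set.Finite.infinite_compl (Set.finite_singleton (0:ℝ))
  have := hPeval t
  rw [hPone, eval_C] at this
  linarith [this]

lemma key_coeff {k : ℕ} (hk : 1 ≤ k) (x : Fin k → ℝ) (hx : Function.Injective x) (N : ℕ) :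
    ∑' (n : (fun n : Fin k → ℕ => ∑ i, n i) ⁻¹' {N}), ∏ i, x i ^ (n : Fin k → ℕ) i
      = ∑ i, x i ^ (N + (k - 1)) / ∏ j ∈ univ.erase i, (x i - x j) := by
  classical
  set M : ℝ := 1 + ∑ i, |x i| with hM
  have hM1 : 1 ≤ M := by
    have : 0 ≤ ∑ i, |x i| := Finset.sum_nonneg fun i _ => abs_nonneg _
    simp only [hM]; linarith
  have hM0 : 0 < M := by linarith
  have hMx : ∀ i, |x i| < M := by
    intro i
    have : |x i| ≤ ∑ j, |x j| := Finset.single_le_sum (fun j _ => abs_nonneg (x j)) (mem_univ i)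
    simp only [hM]; linarith
  have hMinv0 : 0 < M⁻¹ := by positivity
  set H : ℕ → ℝ := fun N =>
    ∑' (n : (fun n : Fin k → ℕ => ∑ i, n i) ⁻¹' {N}), ∏ i, x i ^ (n : Fin k → ℕ) i with hHdef
  set D : ℕ → ℝ := fun N =>
    ∑ i, x i ^ (N + (k - 1)) / ∏ j ∈ univ.erase i, (x i - x j) with hDdef
  set φ : ℝ → ℝ := fun t => ∏ i, (1 - x i * t)⁻¹ with hφdef
  -- basic smallness
  have hyt : ∀ t : ℝ, |t| ≤ M⁻¹ → ∀ i, |x i * t| < 1 := by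
    intro t ht i
    rw [abs_mul]
    calc |x i| * |t| ≤ |x i| * M⁻¹ := by
          exact mul_le_mul_of_nonneg_left ht (abs_nonneg _)
      _ < M * M⁻¹ := by exact mul_lt_mul_of_pos_right (hMx i) hMinv0
      _ = 1 := mul_inv_cancel₀ (ne_of_gt hM0)
  -- fiber computation
  have hfib : ∀ (t : ℝ) (N : ℕ),
      (∑' (n : (fun n : Fin k → ℕ => ∑ i, n i) ⁻¹' {N}), ∏ i, (x i * t) ^ (n : Fin k → ℕ) i)
        = H N * t ^ N := by
    intro t N
    rw [hHdef]
    rw [← tsum_mul_right]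
    refine tsum_congr fun n => ?_
    have hn : ∑ i, (n : Fin k → ℕ) i = N := n.2
    calc ∏ i, (x i * t) ^ (n : Fin k → ℕ) i
        = (∏ i, x i ^ (n : Fin k → ℕ) i) * t ^ (∑ i, (n : Fin k → ℕ) i) := by
          rw [← Finset.prod_pow_eq_pow_sum, ← Finset.prod_mul_distrib]
          exact Finset.prod_congr rfl fun i _ => mul_pow _ _ _
      _ = (∏ i, x i ^ (n : Fin k → ℕ) i) * t ^ N := by rw [hn]
  -- HasSum of H-coefficients
  have h2 : ∀ t : ℝ, |t| ≤ M⁻¹ → HasSum (fun N => H N * t ^ N) (φ t) := by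
    intro t ht
    have h1 := hasSum_prod_pow k (fun i => x i * t) (hyt t ht)
    have hfw := h1.tsum_fiberwise (fun n => ∑ i, n i)
    rw [show (fun N => ∑' (n : (fun n : Fin k → ℕ => ∑ i, n i) ⁻¹' {N}),
        ∏ i, (x i * t) ^ (n : Fin k → ℕ) i) = fun N => H N * t ^ N from funext (hfib t)] at hfw
    exact hfw
  -- HasSum of D-coefficients
  have h3 : ∀ t : ℝ, |t| ≤ M⁻¹ → HasSum (fun N => D N * t ^ N) (φ t) := by
    intro t ht
    have hne : ∀ j : Fin k, (1 - x j * t) ≠ 0 := by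
      intro j h0
      have h := hyt t ht j
      rw [sub_eq_zero] at h0
      rw [← h0] at h
      simp at h
    have hterm : ∀ i : Fin k,
        HasSum (fun N : ℕ => (x i ^ (k-1) / ∏ j ∈ univ.erase i, (x i - x j)) * (x i * t) ^ N)
          ((x i ^ (k-1) / ∏ j ∈ univ.erase i, (x i - x j)) * (1 - x i * t)⁻¹) := by
      intro i
      exact (hasSum_geometric_of_norm_lt_one (ξ := x i * t)
        (by rw [Real.norm_eq_abs]; exact hyt t ht i)).mul_left (x i ^ (k-1) / ∏ j ∈ univ.erase i, (x i - x j))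
    have hsum := hasSum_sum (fun i (_ : i ∈ (univ : Finset (Fin k))) => hterm i)
    have hval : ∑ i, (x i ^ (k-1) / ∏ j ∈ univ.erase i, (x i - x j)) * (1 - x i * t)⁻¹
        = φ t := by
      have hφi : ∀ i : Fin k, (1 - x i * t)⁻¹
          = (∏ j ∈ univ.erase i, (1 - x j * t)) * φ t := by
        intro i
        have hprod : ∏ j : Fin k, (1 - x j * t)
            = (1 - x i * t) * ∏ j ∈ univ.erase i, (1 - x j * t) :=
          (Finset.mul_prod_erase univ _ (mem_univ i)).symm
        have hφt : φ t = ((1 - x i * t) * ∏ j ∈ univ.erase i, (1 - x j * t))⁻¹ := by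
          show (∏ j : Fin k, (1 - x j * t)⁻¹) = _
          rw [Finset.prod_inv_distrib, hprod]
        rw [hφt, mul_inv, mul_comm ((1 - x i * t)⁻¹) _, ← mul_assoc,
          mul_inv_cancel₀ (Finset.prod_ne_zero_iff.mpr fun j _ => hne j), one_mul]
      calc ∑ i, (x i ^ (k-1) / ∏ j ∈ univ.erase i, (x i - x j)) * (1 - x i * t)⁻¹
          = (∑ i, x i ^ (k-1) / (∏ j ∈ univ.erase i, (x i - x j)) *
              ∏ j ∈ univ.erase i, (1 - x j * t)) * φ t := by
            rw [Finset.sum_mul]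
            exact Finset.sum_congr rfl fun i _ => by rw [hφi i]; ring
        _ = φ t := by rw [key_poly hk x hx t, one_mul]
    have hfun : (fun N : ℕ => ∑ i, (x i ^ (k-1) / ∏ j ∈ univ.erase i, (x i - x j)) * (x i * t) ^ N)
        = fun N => D N * t ^ N := by
      funext N
      rw [hDdef, Finset.sum_mul]
      refine Finset.sum_congr rfl fun i _ => ?_
      rw [mul_pow, pow_add, div_eq_mul_inv, div_eq_mul_inv]
      ring
    rw [hfun, hval] at hsum
    exact hsum
  -- radius bounds
  set p := FormalMultilinearSeries.ofScalars ℝ H with hpdef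
  set q := FormalMultilinearSeries.ofScalars ℝ D with hqdef
  set rr : NNReal := Real.toNNReal M⁻¹ with hrr
  have hrrc : (rr : ℝ) = M⁻¹ := Real.coe_toNNReal _ (le_of_lt hMinv0)
  have hpr : Summable fun n => ‖p n‖ * (rr : ℝ) ^ n := by
    have hSabs := hasSum_prod_pow k (fun i => |x i| * M⁻¹)
      (fun i => by
        rw [abs_of_nonneg (by positivity)]
        calc |x i| * M⁻¹ < M * M⁻¹ := mul_lt_mul_of_pos_right (hMx i) hMinv0
          _ = 1 := mul_inv_cancel₀ (ne_of_gt hM0))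
    have hB : Summable fun N => ∑' (n : (fun n : Fin k → ℕ => ∑ i, n i) ⁻¹' {N}),
        ∏ i, (|x i| * M⁻¹) ^ (n : Fin k → ℕ) i :=
      (hSabs.tsum_fiberwise (fun n => ∑ i, n i)).summable
    refine Summable.of_nonneg_of_le (fun N => by positivity) (fun N => ?_) hB
    have hAsum : Summable fun (n : (fun n : Fin k → ℕ => ∑ i, n i) ⁻¹' {N}) =>
        ‖∏ i, (x i * M⁻¹) ^ (n : Fin k → ℕ) i‖ := by
      have hsub := (hasSum_prod_pow k (fun i => x i * M⁻¹)
        (hyt M⁻¹ (by rw [abs_of_nonneg (le_of_lt hMinv0)]))).summable.abs.subtype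
        ((fun n : Fin k → ℕ => ∑ i, n i) ⁻¹' {N})
      refine hsub.congr fun n => ?_
      simp [Real.norm_eq_abs, abs_prod, abs_pow, abs_mul, abs_inv, abs_of_nonneg hM0.le]
    have hnorm := norm_tsum_le_tsum_norm hAsum
    rw [hfib M⁻¹ N] at hnorm
    have hpn : ‖p N‖ * (rr:ℝ) ^ N = ‖H N * M⁻¹ ^ N‖ := by
      rw [hpdef, FormalMultilinearSeries.ofScalars_norm, hrrc, norm_mul, norm_pow]
      rw [Real.norm_eq_abs, Real.norm_eq_abs, abs_of_nonneg (le_of_lt hMinv0)]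
    rw [hpn]
    refine hnorm.trans (le_of_eq (tsum_congr fun n => ?_))
    simp [Real.norm_eq_abs, abs_prod, abs_pow, abs_mul, abs_inv, abs_of_nonneg hM0.le]
  have hqr : Summable fun n => ‖q n‖ * (rr : ℝ) ^ n := by
    have hgeo : ∀ i : Fin k, Summable fun N : ℕ =>
        |x i ^ (k-1) / ∏ j ∈ univ.erase i, (x i - x j)| * (|x i| * M⁻¹) ^ N := by
      intro i
      exact (summable_geometric_of_lt_one (by positivity)
        (by calc |x i| * M⁻¹ < M * M⁻¹ := mul_lt_mul_of_pos_right (hMx i) hMinv0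
              _ = 1 := mul_inv_cancel₀ (ne_of_gt hM0))).mul_left _
    have hS := summable_sum (fun i (_ : i ∈ (univ : Finset (Fin k))) => hgeo i)
    refine Summable.of_nonneg_of_le (fun N => by positivity) (fun N => ?_) hS
    rw [hqdef, FormalMultilinearSeries.ofScalars_norm, hrrc, Real.norm_eq_abs]
    calc |D N| * M⁻¹ ^ N
        ≤ (∑ i, |x i ^ (N + (k-1)) / ∏ j ∈ univ.erase i, (x i - x j)|) * M⁻¹ ^ N := by
          refine mul_le_mul_of_nonneg_right ?_ (by positivity)
          rw [hDdef]
          exact Finset.abs_sum_le_sum_abs _ _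
      _ = ∑ i, |x i ^ (k-1) / ∏ j ∈ univ.erase i, (x i - x j)| * (|x i| * M⁻¹) ^ N := by
          rw [Finset.sum_mul]
          refine Finset.sum_congr rfl fun i _ => ?_
          rw [abs_div, abs_div, abs_pow, abs_pow, mul_pow, pow_add]
          ring
  -- power series on ball
  have hball : Metric.eball (0:ℝ) (ENNReal.ofReal M⁻¹) = Metric.ball 0 M⁻¹ :=
    Metric.emetric_ball (x := (0:ℝ))
  have hcoe : ENNReal.ofReal M⁻¹ = (rr : ENNReal) := rfl
  have hp : HasFPowerSeriesOnBall φ p 0 (ENNReal.ofReal M⁻¹) := by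
    refine ⟨?_, by simpa using hMinv0, ?_⟩
    · rw [hcoe]
      exact p.le_radius_of_summable hpr
    · intro y hy
      rw [hball] at hy
      have hy' : |y| < M⁻¹ := by simpa [Real.dist_eq] using hy
      have heq : (fun n => p n fun _ => y) = fun n => H n * y ^ n := by
        funext n
        rw [hpdef, FormalMultilinearSeries.ofScalars_apply_eq, smul_eq_mul]
      rw [zero_add, heq]
      exact h2 y (le_of_lt hy')
  have hq : HasFPowerSeriesOnBall φ q 0 (ENNReal.ofReal M⁻¹) := by
    refine ⟨?_, by simpa using hMinv0, ?_⟩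
    · rw [hcoe]
      exact q.le_radius_of_summable hqr
    · intro y hy
      rw [hball] at hy
      have hy' : |y| < M⁻¹ := by simpa [Real.dist_eq] using hy
      have heq : (fun n => q n fun _ => y) = fun n => D n * y ^ n := by
        funext n
        rw [hqdef, FormalMultilinearSeries.ofScalars_apply_eq, smul_eq_mul]
      rw [zero_add, heq]
      exact h3 y (le_of_lt hy')
  have hpq : p = q :=
    hp.hasFPowerSeriesAt.eq_formalMultilinearSeries hq.hasFPowerSeriesAt
  have h1 : p N (fun _ => (1:ℝ)) = q N (fun _ => (1:ℝ)) := by rw [hpq]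
  rw [hpdef, hqdef, FormalMultilinearSeries.ofScalars_apply_eq,
    FormalMultilinearSeries.ofScalars_apply_eq] at h1
  simpa using h1

theorem stmt_12 (g : ℕ → ℝ) (R : ℝ) (hR : 1 < R)
    (hconv : ∀ z : ℝ, |z| < R → Summable (fun n : ℕ => g n * z ^ n))
    (ℓ : ℕ) (k : ℕ) (hk : 1 ≤ k)
    (x : Fin k → ℝ) (hx : Function.Injective x) (hxR : ∀ i, |x i| < R) :
    ∑' n : Fin k → ℕ, g (∑ i, n i + ℓ) * ∏ i, x i ^ n i
      = divDiff x (fun z => z ^ (k - 1) * ∑' n : ℕ, g (n + ℓ) * z ^ n) := by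
  classical
  have i0 : Fin k := ⟨0, hk⟩
  have hne : (univ : Finset (Fin k)).Nonempty := ⟨i0, mem_univ i0⟩
  set B : ℝ := max 1 (univ.sup' hne fun i => |x i|) with hB
  have hBR : B < R := by
    rw [hB, max_lt_iff]
    exact ⟨hR, (Finset.sup'_lt_iff hne).mpr fun i _ => hxR i⟩
  set r : ℝ := (B + R) / 2 with hr
  have hB1 : (1:ℝ) ≤ B := le_max_left _ _
  have hBr : B < r := by rw [hr]; linarith
  have hrR : r < R := by rw [hr]; linarith
  have hr0 : 0 < r := by linarith
  have hxr : ∀ i, |x i| < r := by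
    intro i
    have : |x i| ≤ B := le_trans (Finset.le_sup' (fun i => |x i|) (mem_univ i)) (le_max_right _ _)
    linarith
  -- geometric bound on g
  have hgsum : Summable fun m : ℕ => |g m * r ^ m| := (hconv r (by rw [abs_of_pos hr0]; exact hrR)).abs
  set C : ℝ := ∑' m, |g m * r ^ m| with hC
  have hgb : ∀ m, |g m| * r ^ m ≤ C := by
    intro m
    rw [← abs_of_pos (pow_pos hr0 m), ← abs_mul]
    exact Summable.le_tsum hgsum m fun _ _ => abs_nonneg _
  have hgb' : ∀ m, |g m| ≤ C / r ^ m := fun m =>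
    (le_div_iff₀ (pow_pos hr0 m)).mpr (hgb m)
  set y : Fin k → ℝ := fun i => |x i| / r with hy
  have hy0 : ∀ i, 0 ≤ y i := fun i => by positivity
  have hy1 : ∀ i, y i < 1 := fun i => (div_lt_one hr0).mpr (hxr i)
  -- summability of the multiple series
  have hbound : ∀ n : Fin k → ℕ,
      |g (∑ i, n i + ℓ) * ∏ i, x i ^ n i| ≤ C / r ^ ℓ * ∏ i, y i ^ n i := by
    intro n
    rw [abs_mul, abs_prod]
    simp only [abs_pow]
    calc |g (∑ i, n i + ℓ)| * ∏ i, |x i| ^ n i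
        ≤ C / r ^ (∑ i, n i + ℓ) * ∏ i, |x i| ^ n i := by
          refine mul_le_mul_of_nonneg_right (hgb' _) ?_
          exact Finset.prod_nonneg fun i _ => pow_nonneg (abs_nonneg _) _
      _ = C / r ^ ℓ * ∏ i, y i ^ n i := by
          rw [hy]
          simp only [div_pow]
          rw [Finset.prod_div_distrib, Finset.prod_pow_eq_pow_sum, pow_add,
            div_eq_mul_inv, div_eq_mul_inv, div_eq_mul_inv, mul_inv]
          ring
  have SFabs : Summable fun n : Fin k → ℕ => |g (∑ i, n i + ℓ) * ∏ i, x i ^ n i| :=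
    Summable.of_nonneg_of_le (fun n => abs_nonneg _) hbound
      ((summable_prod_pow k y hy0 hy1).mul_left _)
  have SF : Summable fun n : Fin k → ℕ => g (∑ i, n i + ℓ) * ∏ i, x i ^ n i := SFabs.of_abs
  -- group by total degree
  have hfw := SF.hasSum.tsum_fiberwise (fun n => ∑ i, n i)
  have hfib : ∀ N : ℕ,
      (∑' (n : (fun n : Fin k → ℕ => ∑ i, n i) ⁻¹' {N}),
        g (∑ i, (n : Fin k → ℕ) i + ℓ) * ∏ i, x i ^ (n : Fin k → ℕ) i)
      = g (N + ℓ) * ∑' (n : (fun n : Fin k → ℕ => ∑ i, n i) ⁻¹' {N}),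
          ∏ i, x i ^ (n : Fin k → ℕ) i := by
    intro N
    rw [← tsum_mul_left]
    exact tsum_congr fun n => by rw [show ∑ i, (n : Fin k → ℕ) i = N from n.2]
  rw [show (fun N => ∑' (n : (fun n : Fin k → ℕ => ∑ i, n i) ⁻¹' {N}),
      g (∑ i, (n : Fin k → ℕ) i + ℓ) * ∏ i, x i ^ (n : Fin k → ℕ) i)
      = fun N => g (N + ℓ) * ∑' (n : (fun n : Fin k → ℕ => ∑ i, n i) ⁻¹' {N}),
          ∏ i, x i ^ (n : Fin k → ℕ) i from funext hfib] at hfw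
  rw [← hfw.tsum_eq]
  -- now handle the right-hand side
  have hprod_ne : ∀ i : Fin k, (∏ j ∈ univ.erase i, (x i - x j)) ≠ 0 := by
    intro i
    refine Finset.prod_ne_zero_iff.mpr fun j hj => sub_ne_zero.mpr fun h => ?_
    exact (mem_erase.mp hj).1 (hx h.symm)
  have hSi : ∀ i : Fin k, Summable fun m : ℕ => g (m + ℓ) * x i ^ m := by
    intro i
    refine Summable.of_abs (Summable.of_nonneg_of_le (fun m => abs_nonneg _) (fun m => ?_)
      (((summable_geometric_of_lt_one (hy0 i) (hy1 i))).mul_left (C / r ^ ℓ)))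
    rw [abs_mul, abs_pow]
    calc |g (m + ℓ)| * |x i| ^ m ≤ C / r ^ (m + ℓ) * |x i| ^ m := by
          exact mul_le_mul_of_nonneg_right (hgb' _) (pow_nonneg (abs_nonneg _) _)
      _ = C / r ^ ℓ * y i ^ m := by
          rw [hy]
          simp only [div_pow]
          rw [pow_add, div_eq_mul_inv, div_eq_mul_inv, div_eq_mul_inv, mul_inv]
          ring
  have hterm : ∀ i : Fin k,
      HasSum (fun m : ℕ => g (m + ℓ) * x i ^ m * (x i ^ (k-1) / ∏ j ∈ univ.erase i, (x i - x j)))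
        ((∑' m : ℕ, g (m + ℓ) * x i ^ m) * (x i ^ (k-1) / ∏ j ∈ univ.erase i, (x i - x j))) :=
    fun i => (hSi i).hasSum.mul_right _
  have hsum := hasSum_sum (fun i (_ : i ∈ (univ : Finset (Fin k))) => hterm i)
  have hfun : (fun m : ℕ => ∑ i, g (m + ℓ) * x i ^ m *
        (x i ^ (k-1) / ∏ j ∈ univ.erase i, (x i - x j)))
      = fun m : ℕ => g (m + ℓ) * ∑ i, x i ^ (m + (k - 1)) / ∏ j ∈ univ.erase i, (x i - x j) := by
    funext m
    rw [Finset.mul_sum]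
    refine Finset.sum_congr rfl fun i _ => ?_
    rw [pow_add, div_eq_mul_inv, div_eq_mul_inv]
    ring
  have hval : ∑ i, (∑' m : ℕ, g (m + ℓ) * x i ^ m) *
        (x i ^ (k-1) / ∏ j ∈ univ.erase i, (x i - x j))
      = divDiff x (fun z => z ^ (k - 1) * ∑' n : ℕ, g (n + ℓ) * z ^ n) := by
    rw [divDiff]
    refine Finset.sum_congr rfl fun i _ => ?_
    rw [div_eq_mul_inv, div_eq_mul_inv]
    ring
  rw [hfun, hval] at hsum
  rw [← hsum.tsum_eq]
  exact tsum_congr fun N => by rw [key_coeff hk x hx N]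
end
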